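/- arXiv:1210.0480 — 8 statements merged into one kernel-verified Lean document; each statement's English description precedes it below -/
import Mathlib

section
/- Let n ≥ 2 and let λ = (λ_1 ≥ λ_2 ≥ … ≥ λ_{n−1} ≥ 0) be a nonzero integer partition of length n−1, with |λ| = λ_1 + … + λ_{n−1}. Then −|λ|²/n + ∑_{i=1}^{n−1} (λ_i² + (n+1−2i)·λ_i) ≥ (n²−1)/n, with equality if and only if λ = (1,0,…,0) or λ = (1,1,…,1). (Equivalently, among nontrivial irreducible representations of SU(n), the quantity B_n(λ) = (1/n)·(−|λ|²/n + ∑_{i=1}^{n−1} λ_i² + (n+1−2i)λ_i) is minimized, with value 1 − 1/n², exactly at these two weights.) -/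
open Finset

lemma sumc (N : ℝ) (k : ℕ) : ∑ j ∈ Finset.range k, (N - 1 - 2 * j) = k * (N - k) := by
  induction k with
  | zero => simp
  | succ k ih => rw [Finset.sum_range_succ, ih]; push_cast; ring


lemma arith1 (N κ a A C : ℝ) (hN2 : 2 ≤ N) (hκ1 : 1 ≤ κ) (hκm : κ ≤ N - 1)
    (hka : κ ≤ a) (hcau : a^2 ≤ κ * A) (hcheb : κ*(N-κ)*a ≤ κ*C) :
    N^2 - 1 ≤ -a^2 + (A+C)*N := by
  have hN0 : (0:ℝ) < N := by linarith
  have hk0 : (0:ℝ) < κ := by linarith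
  have ha0 : (0:ℝ) ≤ a := by linarith
  have hNk0 : (0:ℝ) ≤ N - κ := by linarith
  have hp : N - 1 ≤ κ * (N - κ) := by
    nlinarith [mul_nonneg (sub_nonneg.mpr hκ1) (sub_nonneg.mpr hκm)]
  have hcau' : N * a^2 ≤ N * (κ * A) := mul_le_mul_of_nonneg_left hcau hN0.le
  have hcheb' : N * ((κ * (N - κ)) * a) ≤ N * (κ * C) := mul_le_mul_of_nonneg_left hcheb hN0.le
  have h₁ : 0 ≤ (N - κ) * (a - κ) * (a + N * κ) :=
    mul_nonneg (mul_nonneg hNk0 (by linarith)) (by positivity)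
  have hq1 : 0 ≤ (κ * (N - κ) - (N - 1)) * a := mul_nonneg (by linarith) ha0
  have hq2 : 0 ≤ N * κ * (κ * (N - κ) - (N - 1)) := mul_nonneg (by positivity) (by linarith)
  have hq3 : 0 ≤ (N - 1) * (a - κ) := mul_nonneg (by linarith) (by linarith)
  have hGk : 0 ≤ (-a^2 + (A + C) * N - (N^2 - 1)) * κ := by nlinarith [hcau', hcheb', h₁, hq1, hq2, hq3]
  have hzk : (0:ℝ) * κ ≤ (-a^2 + (A + C) * N - (N^2 - 1)) * κ := by linarith
  have hG : (0:ℝ) ≤ -a^2 + (A + C) * N - (N^2 - 1) := le_of_mul_le_mul_right hzk hk0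
  linarith

lemma arith2 (N κ a A C : ℝ) (hN2 : 2 ≤ N) (hκ1 : 1 ≤ κ) (hκm : κ ≤ N - 1)
    (hka : κ ≤ a) (hcau : a^2 ≤ κ * A) (hcheb : κ*(N-κ)*a ≤ κ*C)
    (heq : -a^2 + (A+C)*N = N^2 - 1) :
    a ≤ κ ∧ κ*(N-κ) ≤ N-1 := by
  have hN0 : (0:ℝ) < N := by linarith
  have hk0 : (0:ℝ) < κ := by linarith
  have ha0 : (0:ℝ) ≤ a := by linarith
  have hNk0 : (0:ℝ) ≤ N - κ := by linarith
  have hNk1 : (1:ℝ) ≤ N - κ := by linarith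
  have hp : N - 1 ≤ κ * (N - κ) := by
    nlinarith [mul_nonneg (sub_nonneg.mpr hκ1) (sub_nonneg.mpr hκm)]
  have hcau' : N * a^2 ≤ N * (κ * A) := mul_le_mul_of_nonneg_left hcau hN0.le
  have hcheb' : N * ((κ * (N - κ)) * a) ≤ N * (κ * C) := mul_le_mul_of_nonneg_left hcheb hN0.le
  -- key: (N-κ)*a*(a+Nκ) ≤ κ*(N²-1)
  have hkey : (N - κ) * a * (a + N * κ) ≤ κ * (N^2 - 1) := by nlinarith [hcau', hcheb']
  constructor
  · by_contra h
    push_neg at h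
    -- κ < a, want contradiction; use a ≥ κ (already), strict:
    have hq : N ≤ (N - κ) * (κ + 1) := by nlinarith
    nlinarith [mul_nonneg (mul_nonneg hNk0 (by linarith : (0:ℝ) ≤ a - κ)) (by positivity : (0:ℝ) ≤ a + N*κ),
      mul_pos (mul_pos (by linarith : (0:ℝ) < N - κ) (by linarith : (0:ℝ) < a - κ)) (by positivity : (0:ℝ) < a + N*κ),
      mul_nonneg (sub_nonneg.mpr hq) (by positivity : (0:ℝ) ≤ a + N*κ),
      mul_pos hN0 hk0]
  · by_contra h
    push_neg at h
    -- N - 1 < κ(N-κ)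
    nlinarith [mul_nonneg (mul_nonneg hNk0 (by linarith : (0:ℝ) ≤ a - κ)) (by positivity : (0:ℝ) ≤ a + N*κ),
      mul_nonneg (mul_nonneg hNk0 hk0.le) (by linarith : (0:ℝ) ≤ a - κ),
      mul_pos (mul_pos hk0 (by linarith : (0:ℝ) < 1 + N)) (by linarith : (0:ℝ) < κ*(N-κ) - (N-1))]

lemma sumc2 (N : ℝ) (k : ℕ) : ∑ j ∈ Finset.range k, (N - 2 * j) = k * (N - k + 1) := by
  induction k with
  | zero => simp
  | succ k ih => rw [Finset.sum_range_succ, ih]; push_cast; ring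

/-- For `n ≥ 2` and a nonzero integer partition `λ` of length `n-1`, the quantity
`-|λ|²/n + ∑_{i=1}^{n-1} (λ_i² + (n+1-2i)·λ_i)` is at least `(n²-1)/n`, with equality
if and only if `λ = (1,0,…,0)` or `λ = (1,1,…,1)`. -/
theorem statement1 (n : ℕ) (hn : 2 ≤ n) (lam : Fin (n - 1) → ℕ)
    (hanti : Antitone lam) (hne : lam ≠ 0) :
    (((n : ℝ) ^ 2 - 1) / n ≤
      -(∑ i, (lam i : ℝ)) ^ 2 / n +
        ∑ i : Fin (n - 1),
          ((lam i : ℝ) ^ 2 + ((n : ℝ) + 1 - 2 * (((i : ℕ) : ℝ) + 1)) * (lam i : ℝ))) ∧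
    ((-(∑ i, (lam i : ℝ)) ^ 2 / n +
        ∑ i : Fin (n - 1),
          ((lam i : ℝ) ^ 2 + ((n : ℝ) + 1 - 2 * (((i : ℕ) : ℝ) + 1)) * (lam i : ℝ)) =
        ((n : ℝ) ^ 2 - 1) / n) ↔
      ((lam = fun i : Fin (n - 1) => if (i : ℕ) = 0 then 1 else 0) ∨ lam = fun _ => 1)) := by
  classical
  set s : Finset (Fin (n-1)) := Finset.univ.filter (fun i => lam i ≠ 0) with hs
  set k : ℕ := s.card with hkdef
  have hlow : ∀ i j : Fin (n-1), i ≤ j → j ∈ s → i ∈ s := by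
    intro i j hij hj
    simp only [hs, Finset.mem_filter, Finset.mem_univ, true_and] at hj ⊢
    have := hanti hij
    omega
  have hmem : ∀ i : Fin (n-1), i ∈ s ↔ (i:ℕ) < k := by
    intro i
    constructor
    · intro hi
      by_contra h
      push_neg at h
      have hsub : Finset.Iic i ⊆ s := fun j hj => hlow j i (Finset.mem_Iic.mp hj) hi
      have := Finset.card_le_card hsub
      rw [Fin.card_Iic] at this
      omega
    · intro hi
      by_contra h
      have hsub : s ⊆ Finset.Iio i := by
        intro j hj
        rw [Finset.mem_Iio]
        by_contra hj2
        push_neg at hj2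
        exact h (hlow i j hj2 hj)
      have := Finset.card_le_card hsub
      rw [Fin.card_Iio] at this
      omega
  have hk1 : 1 ≤ k := by
    rw [Function.ne_iff] at hne
    obtain ⟨i, hi⟩ := hne
    have hi' : lam i ≠ 0 := by simpa using hi
    have : i ∈ s := by simp [hs, hi']
    exact Finset.card_pos.mpr ⟨i, this⟩
  have hkm : k ≤ n - 1 := by
    calc k ≤ Finset.univ.card := Finset.card_filter_le _ _
    _ = n - 1 := by simp
  -- notation
  set N : ℝ := (n : ℝ) with hN
  have hN2 : (2:ℝ) ≤ N := by rw [hN]; exact_mod_cast hn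
  have hN0 : (0:ℝ) < N := by linarith
  set a : ℝ := ∑ i, (lam i : ℝ) with ha
  set A : ℝ := ∑ i ∈ s, (lam i : ℝ)^2 with hA
  set C : ℝ := ∑ i ∈ s, (N - 1 - 2 * (i:ℕ)) * (lam i : ℝ) with hC
  -- reduce full sums to support sums
  have hzero : ∀ i : Fin (n-1), i ∉ s → lam i = 0 := by
    intro i hi
    by_contra h
    exact hi (by simp [hs, h])
  have haS : a = ∑ i ∈ s, (lam i : ℝ) := by
    rw [ha]
    rw [← Finset.sum_subset (Finset.subset_univ s)]
    intro i _ hi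
    rw [hzero i hi]; simp
  have hsum : ∑ i : Fin (n - 1),
      ((lam i : ℝ) ^ 2 + (N + 1 - 2 * (((i : ℕ) : ℝ) + 1)) * (lam i : ℝ)) = A + C := by
    rw [hA, hC, ← Finset.sum_add_distrib]
    rw [← Finset.sum_subset (Finset.subset_univ s)]
    · exact Finset.sum_congr rfl fun i _ => by ring
    · intro i _ hi
      rw [hzero i hi]; simp
  -- k ≤ S
  have hka : (k:ℝ) ≤ a := by
    rw [haS, hkdef]
    calc (s.card : ℝ) = ∑ i ∈ s, (1:ℝ) := by simp
    _ ≤ ∑ i ∈ s, (lam i : ℝ) := by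
        apply Finset.sum_le_sum
        intro i hi
        have : lam i ≠ 0 := by simpa [hs] using hi
        exact_mod_cast Nat.one_le_iff_ne_zero.mpr this
  have ha0 : 0 ≤ a := by
    rw [ha]; positivity
  -- Cauchy-Schwarz
  have hcauchy : a^2 ≤ k * A := by
    rw [haS, hA, hkdef]
    exact sq_sum_le_card_mul_sum_sq
  -- sum of coefficients over support
  have hfilter : s = Finset.univ.filter (fun i : Fin (n-1) => (i:ℕ) < k) := by
    ext i
    simp only [Finset.mem_filter, Finset.mem_univ, true_and]
    exact hmem i
  have hcoef : ∑ i ∈ s, (N - 1 - 2 * ((i:ℕ):ℝ)) = k * (N - k) := by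
    rw [hfilter, Finset.sum_filter]
    rw [show (∑ i : Fin (n-1), if (i:ℕ) < k then (N - 1 - 2 * ((i:ℕ):ℝ)) else 0)
        = ∑ j ∈ Finset.range (n-1), (if j < k then (N - 1 - 2 * (j:ℝ)) else 0) from
      Fin.sum_univ_eq_sum_range (fun j => if j < k then (N - 1 - 2 * (j:ℝ)) else 0) (n-1)]
    rw [← Finset.sum_filter]
    rw [show (Finset.range (n-1)).filter (fun j => j < k) = Finset.range k by
      ext j; simp only [Finset.mem_filter, Finset.mem_range]; omega]
    exact sumc N k
  -- Chebyshev
  have hcheb : (k * (N - k)) * a ≤ k * C := by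
    rw [← hcoef, haS, hC, hkdef]
    apply MonovaryOn.sum_mul_sum_le_card_mul_sum
    intro i _ j _ hij
    have h1 : (lam i : ℝ) < (lam j : ℝ) := hij
    have h1' : lam i < lam j := by exact_mod_cast h1
    have h2 : (j:Fin (n-1)) ≤ i := by
      by_contra h
      push_neg at h
      exact absurd (hanti h.le) (not_le.mpr h1')
    have h3 : ((j:ℕ):ℝ) ≤ ((i:ℕ):ℝ) := by exact_mod_cast (h2 : (j:ℕ) ≤ (i:ℕ))
    show N - 1 - 2 * ((i:ℕ):ℝ) ≤ N - 1 - 2 * ((j:ℕ):ℝ)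
    linarith
  have hkR1 : (1:ℝ) ≤ (k:ℝ) := by exact_mod_cast hk1
  have hkRm : (k:ℝ) ≤ N - 1 := by
    have h1 : (k:ℝ) ≤ ((n-1 : ℕ):ℝ) := by exact_mod_cast hkm
    rw [Nat.cast_sub (by omega)] at h1
    simpa using h1
  have hp : N - 1 ≤ (k:ℝ) * (N - (k:ℝ)) := by
    nlinarith [mul_nonneg (sub_nonneg.mpr hkR1) (sub_nonneg.mpr hkRm)]
  have hNk0 : (0:ℝ) ≤ N - k := by linarith
  have hk0 : (0:ℝ) < k := by linarith
  have hcast : ((n-1:ℕ):ℝ) = N - 1 := by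
    rw [Nat.cast_sub (by omega)]; simp [hN]
  have hmain : (N^2 - 1)/N ≤ -a^2/N + (A + C) := by
    have key := arith1 N k a A C hN2 hkR1 hkRm hka hcauchy hcheb
    have hdiv : -a^2/N + (A + C) = (-a^2 + (A + C) * N)/N := by field_simp
    rw [hdiv]
    gcongr
  constructor
  · rw [hsum]; exact hmain
  constructor
  · intro hEq
    rw [hsum] at hEq
    have heq' : -a^2 + (A+C)*N = N^2 - 1 := by
      field_simp at hEq
      linarith
    obtain ⟨hak, hkn⟩ := arith2 N k a A C hN2 hkR1 hkRm hka hcauchy hcheb heq'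
    have haEqk : a = (k:ℝ) := le_antisymm hak hka
    have hSnat : ∑ i, lam i = k := by
      have h1 : ((∑ i, lam i : ℕ):ℝ) = (k:ℝ) := by
        rw [Nat.cast_sum]
        rw [← ha]  -- might fail; a is set
        exact haEqk
      exact_mod_cast h1
    have hone : ∀ i ∈ s, lam i = 1 := by
      have hsub : ∑ i ∈ s, lam i = ∑ i, lam i :=
        Finset.sum_subset (Finset.subset_univ s) (fun i _ hi => hzero i hi)
      have hle : ∀ i ∈ s, 1 ≤ lam i := by
        intro i hi
        have : lam i ≠ 0 := by simpa [hs] using hi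
        omega
      have hsumeq : ∑ i ∈ s, lam i = ∑ i ∈ s, 1 := by
        rw [hsub, hSnat, Finset.sum_const, smul_eq_mul, mul_one, hkdef]
      have := (Finset.sum_eq_sum_iff_of_le hle).mp hsumeq.symm
      intro i hi
      exact ((this i hi)).symm
    have hpeq : (k:ℝ)*(N-(k:ℝ)) = N-1 := le_antisymm hkn hp
    have hfac : ((k:ℝ)-1)*((N-1)-(k:ℝ)) = 0 := by linear_combination hpeq
    rcases mul_eq_zero.mp hfac with hcase | hcase
    · -- k = 1
      have hk1' : k = 1 := by
        have : (k:ℝ) = 1 := by linarith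
        exact_mod_cast this
      left
      funext i
      by_cases h0 : (i:ℕ) = 0
      · simp only [h0, if_pos]
        exact hone i ((hmem i).mpr (by omega))
      · simp only [h0, if_neg, ite_false]
        exact hzero i (fun hi => h0 (by have := (hmem i).mp hi; omega))
    · -- k = n - 1
      have hkn1 : k = n - 1 := by
        have : (k:ℝ) = ((n-1:ℕ):ℝ) := by rw [hcast]; linarith
        exact_mod_cast this
      right
      funext i
      exact hone i ((hmem i).mpr (by have := i.isLt; omega))
  · intro h
    rcases h with h | h
    · subst h
      rw [ha]
      have e1 : (∑ i : Fin (n-1), ((if (i:ℕ) = 0 then (1:ℕ) else 0 : ℕ):ℝ)) = 1 := by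
        push_cast
        rw [Fin.sum_univ_eq_sum_range (fun j => if j = 0 then (1:ℝ) else 0) (n-1)]
        rw [Finset.sum_ite_eq' (Finset.range (n-1)) 0 (fun _ => (1:ℝ))]
        simp only [Finset.mem_range]
        rw [if_pos (by omega)]
      have e2 : ∑ i : Fin (n - 1),
          (((if (i:ℕ) = 0 then (1:ℕ) else 0 : ℕ):ℝ) ^ 2
            + (N + 1 - 2 * (((i : ℕ) : ℝ) + 1)) * ((if (i:ℕ) = 0 then (1:ℕ) else 0 : ℕ):ℝ)) = N := by
        have hterm : ∀ i : Fin (n-1),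
            (((if (i:ℕ) = 0 then (1:ℕ) else 0 : ℕ):ℝ) ^ 2
              + (N + 1 - 2 * (((i : ℕ) : ℝ) + 1)) * ((if (i:ℕ) = 0 then (1:ℕ) else 0 : ℕ):ℝ))
            = if (i:ℕ) = 0 then N else 0 := by
          intro i
          by_cases h0 : (i:ℕ) = 0
          · rw [if_pos h0, if_pos h0, h0]
            push_cast
            ring
          · rw [if_neg h0, if_neg h0]
            push_cast
            ring
        rw [Finset.sum_congr rfl (fun i _ => hterm i)]
        rw [Fin.sum_univ_eq_sum_range (fun j => if j = 0 then N else 0) (n-1)]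
        rw [Finset.sum_ite_eq' (Finset.range (n-1)) 0 (fun _ => N)]
        simp only [Finset.mem_range]
        rw [if_pos (by omega)]
      rw [e1, e2]
      field_simp
      ring
    · subst h
      rw [ha]
      have e1 : (∑ _i : Fin (n-1), ((1:ℕ):ℝ)) = ((n-1:ℕ):ℝ) := by simp
      have e2 : ∑ i : Fin (n - 1),
          (((1:ℕ):ℝ) ^ 2 + (N + 1 - 2 * (((i : ℕ) : ℝ) + 1)) * ((1:ℕ):ℝ))
          = ((n-1:ℕ):ℝ) * (N - ((n-1:ℕ):ℝ) + 1) := by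
        have hterm : ∀ i : Fin (n-1),
            (((1:ℕ):ℝ) ^ 2 + (N + 1 - 2 * (((i : ℕ) : ℝ) + 1)) * ((1:ℕ):ℝ))
            = N - 2 * ((i:ℕ):ℝ) := by
          intro i; push_cast; ring
        rw [Finset.sum_congr rfl (fun i _ => hterm i)]
        rw [Fin.sum_univ_eq_sum_range (fun j => N - 2 * (j:ℝ)) (n-1)]
        exact sumc2 N (n-1)
      rw [e1, e2, hcast]
      have hN1 : N - 1 ≠ 0 := by linarith
      field_simp
      ring
end

section
/- Let n ≥ 5 and let λ = (λ_1 ≥ … ≥ λ_n) be either a nonzero integer partition of length n or a half-partition of length n (all entries in ℕ + 1/2). Then ∑_{i=1}^n (λ_i² + (2n+1−2i)·λ_i) ≥ 2n, with equality if and only if λ = (1,0,…,0). (Equivalently, for the group SO(2n+1,ℝ), the quantity B_n(λ) = (1/(2n+1))·∑_{i=1}^n (λ_i² + (2n+1−2i)λ_i) over nontrivial dominant weights is minimized, with value 2n/(2n+1), exactly at the geometric representation.) -/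
/-!
The quantity is a sum of the coordinatewise functions `x ↦ x² + cᵢ x` with `cᵢ = 2n - 2i + 1 > 0`
(indices from `1`), each strictly increasing on `[0, ∞)`. So the sum is strictly monotone on
nonnegative vectors. A nonzero antitone integer vector dominates `(1, 0, …, 0)`, whose value is `2n`,
which gives the inequality together with its equality case. A half-integer vector dominates
`(1/2, …, 1/2)`, whose value `n/4 + n²/2` already exceeds `2n` once `n ≥ 4`.
-/

open Finset

/-- The coefficient `2n + 1 - 2i` of `λᵢ`, with the `0`-based index `i : Fin n` standing for
`i + 1`. -/
noncomputable def casimirCoeff (n : ℕ) (i : Fin n) : ℝ :=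
  2 * (n : ℝ) + 1 - 2 * (((i : ℕ) : ℝ) + 1)

/-- `(2n + 1) · B_n(λ)` in the notation of the paper. -/
noncomputable def casimir (n : ℕ) (lam : Fin n → ℝ) : ℝ :=
  ∑ i : Fin n, (lam i ^ 2 + casimirCoeff n i * lam i)

/-- The highest weight `(1, 0, …, 0)` of the geometric representation. -/
def geometricWeight (n : ℕ) : Fin n → ℝ :=
  fun i => if (i : ℕ) = 0 then 1 else 0

theorem casimirCoeff_nonneg (n : ℕ) (i : Fin n) : 0 ≤ casimirCoeff n i := by
  have hi : ((i : ℕ) : ℝ) + 1 ≤ n := by exact_mod_cast i.isLt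
  unfold casimirCoeff
  linarith

theorem sum_casimirCoeff : ∀ n : ℕ, ∑ i : Fin n, casimirCoeff n i = (n : ℝ) ^ 2
  | 0 => by simp
  | n + 1 => by
    have hsucc : ∀ i : Fin n, casimirCoeff (n + 1) i.succ = casimirCoeff n i := by
      intro i
      simp only [casimirCoeff, Fin.val_succ]
      push_cast
      ring
    rw [Fin.sum_univ_succ]
    simp only [hsucc, sum_casimirCoeff n]
    simp only [casimirCoeff, Fin.val_zero]
    push_cast
    ring

theorem strictMonoOn_sq_add_mul {c : ℝ} (hc : 0 ≤ c) :
    StrictMonoOn (fun x : ℝ => x ^ 2 + c * x) (Set.Ici 0) := by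
  intro x hx y _ hxy
  simp only [Set.mem_Ici] at hx
  nlinarith

theorem casimir_strictMonoOn (n : ℕ) : StrictMonoOn (casimir n) (Set.Ici 0) := by
  intro a ha x hx hax
  obtain ⟨hle, i, hlt⟩ := Pi.lt_def.mp hax
  have hterm := fun j => strictMonoOn_sq_add_mul (casimirCoeff_nonneg n j)
  exact Finset.sum_lt_sum (fun j _ => (hterm j).monotoneOn (ha j) (hx j) (hle j))
    ⟨i, mem_univ i, hterm i (ha i) (hx i) hlt⟩

theorem casimir_le_of_le {n : ℕ} {a x : Fin n → ℝ} (ha : 0 ≤ a) (hax : a ≤ x) :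
    casimir n a ≤ casimir n x :=
  (casimir_strictMonoOn n).monotoneOn ha (ha.trans hax) hax

theorem casimir_eq_iff_of_le {n : ℕ} {a x : Fin n → ℝ} (ha : 0 ≤ a) (hax : a ≤ x) :
    casimir n x = casimir n a ↔ x = a := by
  refine ⟨fun h => ?_, fun h => h ▸ rfl⟩
  by_contra hne
  exact (casimir_strictMonoOn n ha (ha.trans hax) (lt_of_le_of_ne hax (Ne.symm hne))).ne' h

theorem casimir_geometricWeight {n : ℕ} (hn : 0 < n) : casimir n (geometricWeight n) = 2 * n := by
  rw [casimir, Finset.sum_eq_single ⟨0, hn⟩]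
  · simp [geometricWeight, casimirCoeff]
    ring
  · intro i _ hi
    have : (i : ℕ) ≠ 0 := fun h => hi (Fin.ext h)
    simp [geometricWeight, this]
  · simp

theorem geometricWeight_nonneg (n : ℕ) : 0 ≤ geometricWeight n := fun i => by
  unfold geometricWeight
  split_ifs <;> norm_num

theorem geometricWeight_le {n : ℕ} (hn : 0 < n) {lam : Fin n → ℝ} (hlam : 0 ≤ lam)
    (h0 : 1 ≤ lam ⟨0, hn⟩) : geometricWeight n ≤ lam := by
  intro i
  by_cases hi : (i : ℕ) = 0
  · obtain rfl : i = ⟨0, hn⟩ := Fin.ext hi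
    simpa [geometricWeight] using h0
  · simpa [geometricWeight, hi] using hlam i

theorem casimir_const_half (n : ℕ) :
    casimir n (fun _ => 1 / 2) = (n : ℝ) / 4 + (n : ℝ) ^ 2 / 2 := by
  have hterm : ∀ i : Fin n, (1 / 2 : ℝ) ^ 2 + casimirCoeff n i * (1 / 2) =
      1 / 4 + 1 / 2 * casimirCoeff n i := fun i => by ring
  rw [casimir, Finset.sum_congr rfl fun i _ => hterm i, Finset.sum_add_distrib, ← Finset.mul_sum,
    sum_casimirCoeff]
  simp only [sum_const, card_univ, Fintype.card_fin, nsmul_eq_mul]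
  ring

theorem two_mul_lt_casimir_of_half_le {n : ℕ} (hn : 4 ≤ n) {lam : Fin n → ℝ}
    (hlam : ∀ i, 1 / 2 ≤ lam i) : 2 * (n : ℝ) < casimir n lam := by
  have hnR : (4 : ℝ) ≤ n := by exact_mod_cast hn
  calc 2 * (n : ℝ) < (n : ℝ) / 4 + (n : ℝ) ^ 2 / 2 := by nlinarith
    _ = casimir n (fun _ => 1 / 2) := (casimir_const_half n).symm
    _ ≤ casimir n lam := casimir_le_of_le (fun _ => by norm_num) hlam

/-- For `n ≥ 5` and `λ` either a nonzero integer partition of length `n` or a half-partition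
of length `n`, one has `∑_{i=1}^n (λ_i² + (2n+1-2i)·λ_i) ≥ 2n`, with equality iff
`λ = (1,0,…,0)`. -/
theorem statement2 (n : ℕ) (hn : 5 ≤ n) (lam : Fin n → ℝ) (hanti : Antitone lam)
    (hlam : ((∀ i, ∃ m : ℕ, lam i = m) ∧ lam ≠ 0) ∨
      (∀ i, ∃ m : ℕ, lam i = (m : ℝ) + 1 / 2)) :
    (2 * (n : ℝ) ≤
      ∑ i : Fin n, (lam i ^ 2 + (2 * (n : ℝ) + 1 - 2 * (((i : ℕ) : ℝ) + 1)) * lam i)) ∧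
    ((∑ i : Fin n, (lam i ^ 2 + (2 * (n : ℝ) + 1 - 2 * (((i : ℕ) : ℝ) + 1)) * lam i) =
        2 * (n : ℝ)) ↔
      lam = fun i : Fin n => if (i : ℕ) = 0 then 1 else 0) := by
  change 2 * (n : ℝ) ≤ casimir n lam ∧ (casimir n lam = 2 * n ↔ lam = geometricWeight n)
  have hn0 : 0 < n := by omega
  rcases hlam with ⟨hnat, hne⟩ | hhalf
  · have hnonneg : 0 ≤ lam := fun i => by obtain ⟨m, hm⟩ := hnat i; simp [hm]
    obtain ⟨j, hj⟩ := Function.ne_iff.mp hne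
    rw [Pi.zero_apply] at hj
    have hj1 : 1 ≤ lam j := by
      obtain ⟨m, hm⟩ := hnat j
      rw [hm] at hj ⊢
      exact Nat.one_le_cast.mpr (Nat.one_le_iff_ne_zero.mpr (by exact_mod_cast hj))
    have hge := geometricWeight_le hn0 hnonneg (hj1.trans (hanti (Nat.zero_le _)))
    rw [← casimir_geometricWeight hn0]
    exact ⟨casimir_le_of_le (geometricWeight_nonneg n) hge,
      casimir_eq_iff_of_le (geometricWeight_nonneg n) hge⟩
  · have hlt := two_mul_lt_casimir_of_half_le (lam := lam) (by omega) fun i => by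
      obtain ⟨m, hm⟩ := hhalf i
      rw [hm]
      linarith [(Nat.cast_nonneg m : (0 : ℝ) ≤ m)]
    refine ⟨hlt.le, iff_of_false hlt.ne' ?_⟩
    rintro rfl
    exact hlt.ne' (casimir_geometricWeight hn0)
end

section
/- Let n ≥ 3 and let λ = (λ_1 ≥ λ_2 ≥ … ≥ λ_n ≥ 0) be a nonzero integer partition of length n. Then ∑_{i=1}^n (λ_i² + (2n+2−2i)·λ_i) ≥ 2n+1, with equality if and only if λ = (1,0,…,0). (Equivalently, for the compact symplectic group USp(n,ℍ), the quantity B_n(λ) = (1/(2n))·∑_{i=1}^n (λ_i² + (2n+2−2i)λ_i) over nontrivial dominant weights is minimized, with value (2n+1)/(2n), exactly at the geometric representation.) -/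
/-- For `n ≥ 3` and a nonzero integer partition `λ` of length `n`, one has
`∑_{i=1}^n (λ_i² + (2n+2-2i)·λ_i) ≥ 2n+1`, with equality iff `λ = (1,0,…,0)`. -/
theorem statement4 (n : ℕ) (hn : 3 ≤ n) (lam : Fin n → ℕ) (hanti : Antitone lam)
    (hne : lam ≠ 0) :
    (2 * (n : ℝ) + 1 ≤
      ∑ i : Fin n,
        ((lam i : ℝ) ^ 2 + (2 * (n : ℝ) + 2 - 2 * (((i : ℕ) : ℝ) + 1)) * (lam i : ℝ))) ∧
    ((∑ i : Fin n,
        ((lam i : ℝ) ^ 2 + (2 * (n : ℝ) + 2 - 2 * (((i : ℕ) : ℝ) + 1)) * (lam i : ℝ)) =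
        2 * (n : ℝ) + 1) ↔
      lam = fun i : Fin n => if (i : ℕ) = 0 then 1 else 0) := by
  haveI : NeZero n := ⟨by omega⟩
  -- λ₀ ≥ 1
  have h0 : 1 ≤ lam 0 := by
    by_contra h
    push_neg at h
    apply hne
    funext i
    have := hanti (Fin.zero_le i)
    simp only [Pi.zero_apply]
    omega
  -- rewrite each term as a natural number cast
  have hterm : ∀ i : Fin n,
      ((lam i : ℝ) ^ 2 + (2 * (n : ℝ) + 2 - 2 * (((i : ℕ) : ℝ) + 1)) * (lam i : ℝ))
        = (((lam i) ^ 2 + 2 * (n - (i : ℕ)) * (lam i) : ℕ) : ℝ) := by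
    intro i
    have hi : (i : ℕ) ≤ n := i.isLt.le
    push_cast [Nat.cast_sub hi]
    ring
  have hsum : (∑ i : Fin n,
      ((lam i : ℝ) ^ 2 + (2 * (n : ℝ) + 2 - 2 * (((i : ℕ) : ℝ) + 1)) * (lam i : ℝ)))
      = ((∑ i : Fin n, ((lam i) ^ 2 + 2 * (n - (i : ℕ)) * (lam i)) : ℕ) : ℝ) := by
    rw [Nat.cast_sum]
    exact Finset.sum_congr rfl fun i _ => hterm i
  set S : ℕ := ∑ i : Fin n, ((lam i) ^ 2 + 2 * (n - (i : ℕ)) * (lam i)) with hS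
  have hc : (2 * (n : ℝ) + 1) = ((2 * n + 1 : ℕ) : ℝ) := by push_cast; ring
  rw [hsum, hc, Nat.cast_le, Nat.cast_inj]
  -- natural-number version
  have hsplit : ((lam 0) ^ 2 + 2 * (n - ((0 : Fin n) : ℕ)) * (lam 0))
      + ∑ i ∈ Finset.univ.erase (0 : Fin n), ((lam i) ^ 2 + 2 * (n - (i : ℕ)) * (lam i)) = S := by
    rw [hS]
    exact Finset.add_sum_erase _ (fun i : Fin n => (lam i) ^ 2 + 2 * (n - (i : ℕ)) * (lam i)) (Finset.mem_univ 0)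
  have hz : ((0 : Fin n) : ℕ) = 0 := rfl
  have hlow : 2 * n + 1 ≤ S := by
    have h1 : 2 * n + 1 ≤ (lam 0) ^ 2 + 2 * (n - ((0 : Fin n) : ℕ)) * (lam 0) := by
      rw [hz, Nat.sub_zero]
      nlinarith [h0]
    omega
  refine ⟨hlow, ?_, ?_⟩
  · intro hEq
    -- equality case: λ₀ = 1 and the rest vanish
    have hT : ∑ i ∈ Finset.univ.erase (0 : Fin n),
        ((lam i) ^ 2 + 2 * (n - (i : ℕ)) * (lam i)) = 0 ∧ lam 0 = 1 := by
      constructor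
      · by_contra h
        have h1 : 2 * n + 1 ≤ (lam 0) ^ 2 + 2 * (n - ((0 : Fin n) : ℕ)) * (lam 0) := by
          rw [hz, Nat.sub_zero]; nlinarith [h0]
        omega
      · by_contra h
        have h2 : 2 ≤ lam 0 := by omega
        have h1 : 4 * n + 4 ≤ (lam 0) ^ 2 + 2 * (n - ((0 : Fin n) : ℕ)) * (lam 0) := by
          rw [hz, Nat.sub_zero]; nlinarith [h2]
        have hTnn : 0 ≤ ∑ i ∈ Finset.univ.erase (0 : Fin n),
            ((lam i) ^ 2 + 2 * (n - (i : ℕ)) * (lam i)) := Nat.zero_le _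
        omega
    obtain ⟨hT0, hl0⟩ := hT
    rw [Finset.sum_eq_zero_iff] at hT0
    funext i
    by_cases hi : i = 0
    · subst hi; simpa using hl0
    · have := hT0 i (Finset.mem_erase.mpr ⟨hi, Finset.mem_univ i⟩)
      have hin : (i : ℕ) ≠ 0 := fun h => hi (Fin.ext h)
      have hin2 : (i : ℕ) < n := i.isLt
      have hlam : lam i = 0 := by
        have h2 : 1 ≤ n - (i : ℕ) := by omega
        nlinarith [this]
      simp [hlam, hin]
  · intro hEq
    subst hEq
    rw [← hsplit]
    have h1 : ∑ i ∈ Finset.univ.erase (0 : Fin n),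
        (((fun i : Fin n => if (i : ℕ) = 0 then 1 else 0) i) ^ 2
          + 2 * (n - (i : ℕ)) * ((fun i : Fin n => if (i : ℕ) = 0 then 1 else 0) i)) = 0 := by
      apply Finset.sum_eq_zero
      intro i hi
      have hi0 : i ≠ 0 := (Finset.mem_erase.mp hi).1
      have hin : (i : ℕ) ≠ 0 := fun h => hi0 (Fin.ext h)
      simp [hin]
    rw [h1]
    simp [hz]
    ring
end

section
/- Let n ≥ 1 and let λ = (λ_1 ≥ … ≥ λ_n ≥ 0) be an integer partition of length n, and let λ ⊞ 1/2 denote the half-partition (λ_1 + 1/2, …, λ_n + 1/2). Then: (i) the ratio of dimensions satisfies ∏_{1≤i≤j≤n} (λ_i+λ_j+2n+2−i−j)/(λ_i+λ_j+2n+1−i−j) ≤ 2^n; (ii) the difference of exponents satisfies (1/(2n+1))·∑_{i=1}^n ((λ_i+1/2)² + (2n+1−2i)(λ_i+1/2)) − (1/(2n+1))·∑_{i=1}^n (λ_i² + (2n+1−2i)λ_i) ≥ n/4; and consequently (iii) ∏_{1≤i≤j≤n} (λ_i+λ_j+2n+2−i−j)/(λ_i+λ_j+2n+1−i−j) · (2n+1)^{−(1/(2n+1))·∑_{i=1}^n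 (λ_i + 1/4 + (2n+1−2i)/2)} ≤ exp(n·(log 2 − log(2n+1)/4)) ≤ 2. -/
/-!
Row `i` of the dimension ratio is `∏_{j ≥ i} (x_j + 1)/x_j` with `x_j = λ_i + λ_j + 2n - 1 - i - j`.
Since `λ` is non-increasing, `x_j` drops by at least one at each step, so the row telescopes to at
most `(x_i + 1)/x_{n-1} ≤ 2`. The exponent difference is `(∑ λ_i + ∑ (ρ_i + 1/4))/(2n+1)` and
`∑ ρ_i = n²/2`, which gives `n/4`. Combining the two, the last bound comes down to
`16ⁿ ≤ 16 (2n+1)ⁿ`.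
-/

open Finset Real

/-- Row `i` of `D^{λ⊞1/2} / D^λ` for `SO(2n+1)`: the factors `λ_i - λ_j + j - i` are invariant under
the shift and cancel, leaving only the second product. Indices are `0`-based, so `i + 1` is the
paper's `i`. -/
noncomputable def dimRatioRow (n : ℕ) (lam : Fin n → ℝ) (i : Fin n) : ℝ :=
  ∏ j ∈ Ici i,
    ((lam i + lam j + (2 * (n : ℝ) + 2 - (((i : ℕ) : ℝ) + 1) - (((j : ℕ) : ℝ) + 1))) /
      (lam i + lam j + (2 * (n : ℝ) + 1 - (((i : ℕ) : ℝ) + 1) - (((j : ℕ) : ℝ) + 1))))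

noncomputable def dimRatio (n : ℕ) (lam : Fin n → ℝ) : ℝ :=
  ∏ i : Fin n, dimRatioRow n lam i

/-- The exponent `B_n(λ) = ⟨λ, λ + 2ρ⟩ / (2n+1)`, with `ρ_i = n + 1/2 - (i + 1)` in `0`-based
indexing. -/
noncomputable def casimirB (n : ℕ) (x : Fin n → ℝ) : ℝ :=
  1 / (2 * (n : ℝ) + 1) *
    ∑ i : Fin n, (x i ^ 2 + (2 * (n : ℝ) + 1 - 2 * (((i : ℕ) : ℝ) + 1)) * x i)

theorem prod_Icc_add_one_div_le (x : ℕ → ℝ) {a b : ℕ} (hab : a ≤ b)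
    (hpos : ∀ k ∈ Icc a b, 0 < x k) (hstep : ∀ k ∈ Ico a b, x (k + 1) + 1 ≤ x k) :
    ∏ k ∈ Icc a b, (x k + 1) / x k ≤ (x a + 1) / x b := by
  induction b, hab using Nat.le_induction with
  | base => simp
  | succ m hm ih =>
    have hpos' : ∀ k ∈ Icc a m, 0 < x k := fun k hk => hpos k (Icc_subset_Icc_right m.le_succ hk)
    have ih := ih hpos' (fun k hk => hstep k (Ico_subset_Ico_right m.le_succ hk))
    have hm_pos : 0 < x m := hpos' m (by simp [hm])
    have hsucc_pos : 0 < x (m + 1) := hpos (m + 1) (by simp; omega)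
    have hlast : x (m + 1) + 1 ≤ x m := hstep m (by simp [hm])
    rw [prod_Icc_succ_top (by omega), mul_comm]
    calc (x (m + 1) + 1) / x (m + 1) * ∏ k ∈ Icc a m, (x k + 1) / x k
        ≤ x m / x (m + 1) * ((x a + 1) / x m) := by
          gcongr
          exact prod_nonneg fun k hk => by have := hpos' k hk; positivity
      _ = (x a + 1) / x (m + 1) := by field_simp

section Row

variable {n : ℕ} {lam : Fin n → ℝ}

theorem dimRatioRow_eq_prod_Icc (i : Fin n) (x : ℕ → ℝ)
    (hx : ∀ j : Fin n, x j = lam i + lam j + (2 * n - 1 - i - j)) :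
    dimRatioRow n lam i = ∏ k ∈ Icc (i : ℕ) (n - 1), (x k + 1) / x k := by
  rw [show Icc (i : ℕ) (n - 1) = Ico (i : ℕ) n by ext; simp; omega, ← Fin.map_valEmbedding_Ici,
    prod_map]
  refine prod_congr rfl fun j _ => ?_
  rw [Fin.valEmbedding_apply, hx]
  congr 1 <;> ring

theorem dimRatioRow_nonneg (hlam : ∀ i, 0 ≤ lam i) (i : Fin n) : 0 ≤ dimRatioRow n lam i := by
  refine prod_nonneg fun j _ => ?_
  have hi : ((i : ℕ) : ℝ) + 1 ≤ n := by exact_mod_cast i.isLt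
  have hj : ((j : ℕ) : ℝ) + 1 ≤ n := by exact_mod_cast j.isLt
  have := hlam i
  have := hlam j
  exact div_nonneg (by linarith) (by linarith)

theorem dimRatioRow_le_two (hlam : ∀ i, 0 ≤ lam i) (hanti : Antitone lam) (i : Fin n) :
    dimRatioRow n lam i ≤ 2 := by
  obtain ⟨m, rfl⟩ : ∃ m, n = m + 1 := ⟨n - 1, by have := i.isLt; omega⟩
  set μ : ℕ → ℝ := fun k => if h : k < m + 1 then lam ⟨k, h⟩ else 0
  have hμ : ∀ j : Fin (m + 1), μ j = lam j := fun j => dif_pos j.isLt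
  have hμ_nonneg : ∀ k, 0 ≤ μ k := fun k => by
    simp only [μ]; split
    exacts [hlam _, le_rfl]
  have hμ_anti : ∀ k < m, μ (k + 1) ≤ μ k := fun k hk => by
    simp only [μ, dif_pos (by omega : k + 1 < m + 1), dif_pos (by omega : k < m + 1)]
    exact hanti (Fin.mk_le_mk.2 k.le_succ)
  set x : ℕ → ℝ := fun k => lam i + μ k + (2 * (m + 1) - 1 - i - k)
  rw [dimRatioRow_eq_prod_Icc i x fun j => by simp only [x, hμ]; push_cast; ring,
    Nat.add_sub_cancel]
  have hi : (i : ℕ) ≤ m := Nat.lt_succ_iff.1 i.isLt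
  have hpos : ∀ k ∈ Icc (i : ℕ) m, 0 < x k := fun k hk => by
    have hk : (i : ℕ) + k ≤ 2 * m := by simp only [mem_Icc] at hk; omega
    have : ((i : ℕ) : ℝ) + k ≤ 2 * m := by exact_mod_cast hk
    linarith [hlam i, hμ_nonneg k]
  have hstep : ∀ k ∈ Ico (i : ℕ) m, x (k + 1) + 1 ≤ x k := fun k hk => by
    have := hμ_anti k (mem_Ico.1 hk).2
    simp only [x]; push_cast; linarith
  calc ∏ k ∈ Icc (i : ℕ) m, (x k + 1) / x k ≤ (x i + 1) / x m :=
        prod_Icc_add_one_div_le x hi hpos hstep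
    _ ≤ 2 := by
      rw [div_le_iff₀ (hpos m (by simp [hi]))]
      have : ((i : ℕ) : ℝ) ≤ m := by exact_mod_cast hi
      simp only [x, hμ i]
      linarith [hμ_nonneg m]

end Row

theorem dimRatio_le_two_pow {n : ℕ} {lam : Fin n → ℝ} (hlam : ∀ i, 0 ≤ lam i)
    (hanti : Antitone lam) : dimRatio n lam ≤ 2 ^ n := by
  calc dimRatio n lam ≤ ∏ _i : Fin n, (2 : ℝ) :=
        prod_le_prod (fun i _ => dimRatioRow_nonneg hlam i)
          (fun i _ => dimRatioRow_le_two hlam hanti i)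
    _ = 2 ^ n := by simp

theorem sum_range_sub_two_mul (c : ℝ) (m : ℕ) :
    ∑ i ∈ range m, (c - 2 * i) = m * (c - m + 1) := by
  induction m with
  | zero => simp
  | succ m ih => rw [sum_range_succ, ih]; push_cast; ring

theorem casimirB_add_half_sub (n : ℕ) (x : Fin n → ℝ) :
    casimirB n (fun i => x i + 1 / 2) - casimirB n x =
      1 / (2 * (n : ℝ) + 1) *
        ∑ i : Fin n, (x i + 1 / 4 + (2 * (n : ℝ) + 1 - 2 * (((i : ℕ) : ℝ) + 1)) / 2) := by
  rw [casimirB, casimirB, ← mul_sub, ← sum_sub_distrib]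
  congr 1
  exact sum_congr rfl fun i _ => by ring

theorem quarter_le_casimirB_add_half_sub (n : ℕ) {x : Fin n → ℝ} (hx : ∀ i, 0 ≤ x i) :
    (n : ℝ) / 4 ≤ casimirB n (fun i => x i + 1 / 2) - casimirB n x := by
  have hρ : ∑ i : Fin n, (1 / 4 + (2 * (n : ℝ) + 1 - 2 * (((i : ℕ) : ℝ) + 1)) / 2) =
      n * (2 * n + 1) / 4 := by
    rw [Fin.sum_univ_eq_sum_range (fun i => 1 / 4 + (2 * (n : ℝ) + 1 - 2 * ((i : ℝ) + 1)) / 2)]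
    calc ∑ i ∈ range n, (1 / 4 + (2 * (n : ℝ) + 1 - 2 * ((i : ℝ) + 1)) / 2)
        = (∑ i ∈ range n, ((2 * n - 1 / 2) - 2 * (i : ℝ))) / 2 := by
          rw [sum_div]; exact sum_congr rfl fun i _ => by ring
      _ = n * (2 * n + 1) / 4 := by rw [sum_range_sub_two_mul]; ring
  have hsum : n * (2 * n + 1) / 4 ≤
      ∑ i : Fin n, (x i + 1 / 4 + (2 * (n : ℝ) + 1 - 2 * (((i : ℕ) : ℝ) + 1)) / 2) := by
    rw [← hρ]
    exact sum_le_sum fun i _ => by linarith [hx i]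
  rw [casimirB_add_half_sub, one_div_mul_eq_div, le_div_iff₀ (by positivity)]
  linarith

theorem two_pow_mul_rpow_eq_exp (n : ℕ) {b : ℝ} (hb : 0 < b) :
    (2 : ℝ) ^ n * b ^ (-((n : ℝ) / 4)) = exp (n * (log 2 - log b / 4)) := by
  rw [← rpow_natCast, rpow_def_of_pos two_pos, rpow_def_of_pos hb, ← exp_add]
  ring_nf

theorem sixteen_pow_le (n : ℕ) : 16 ^ n ≤ 16 * (2 * n + 1) ^ n := by
  rcases le_or_gt n 7 with h | h
  · interval_cases n <;> norm_num
  · calc 16 ^ n ≤ (2 * n + 1) ^ n := Nat.pow_le_pow_left (by omega) n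
      _ ≤ 16 * (2 * n + 1) ^ n := Nat.le_mul_of_pos_left _ (by norm_num)

theorem exp_mul_log_two_sub_le_two (n : ℕ) :
    exp (n * (log 2 - log (2 * n + 1) / 4)) ≤ 2 := by
  have h := log_le_log (by positivity)
    (by exact_mod_cast sixteen_pow_le n : (16 : ℝ) ^ n ≤ 16 * (2 * n + 1) ^ n)
  have h16 : log 16 = 4 * log 2 := by
    rw [show (16 : ℝ) = 2 ^ 4 by norm_num, log_pow]; norm_num
  rw [log_mul (by norm_num) (by positivity), log_pow, log_pow, h16] at h
  calc exp (n * (log 2 - log (2 * n + 1) / 4)) ≤ exp (log 2) := exp_le_exp.2 (by linarith)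
    _ = 2 := exp_log two_pos

theorem statement6_general (n : ℕ) (lam : Fin n → ℕ) (hanti : Antitone lam) :
    ((∏ i : Fin n, ∏ j ∈ Finset.Ici i,
        (((lam i : ℝ) + (lam j : ℝ) +
            (2 * (n : ℝ) + 2 - (((i : ℕ) : ℝ) + 1) - (((j : ℕ) : ℝ) + 1))) /
          ((lam i : ℝ) + (lam j : ℝ) +
            (2 * (n : ℝ) + 1 - (((i : ℕ) : ℝ) + 1) - (((j : ℕ) : ℝ) + 1))))) ≤ 2 ^ n) ∧
    ((n : ℝ) / 4 ≤
      1 / (2 * (n : ℝ) + 1) *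
          ∑ i : Fin n,
            (((lam i : ℝ) + 1 / 2) ^ 2 +
              (2 * (n : ℝ) + 1 - 2 * (((i : ℕ) : ℝ) + 1)) * ((lam i : ℝ) + 1 / 2)) -
        1 / (2 * (n : ℝ) + 1) *
          ∑ i : Fin n,
            ((lam i : ℝ) ^ 2 +
              (2 * (n : ℝ) + 1 - 2 * (((i : ℕ) : ℝ) + 1)) * (lam i : ℝ))) ∧
    ((∏ i : Fin n, ∏ j ∈ Finset.Ici i,
        (((lam i : ℝ) + (lam j : ℝ) +
            (2 * (n : ℝ) + 2 - (((i : ℕ) : ℝ) + 1) - (((j : ℕ) : ℝ) + 1))) /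
          ((lam i : ℝ) + (lam j : ℝ) +
            (2 * (n : ℝ) + 1 - (((i : ℕ) : ℝ) + 1) - (((j : ℕ) : ℝ) + 1))))) *
        (2 * (n : ℝ) + 1) ^
          (-(1 / (2 * (n : ℝ) + 1)) *
            ∑ i : Fin n,
              ((lam i : ℝ) + 1 / 4 +
                (2 * (n : ℝ) + 1 - 2 * (((i : ℕ) : ℝ) + 1)) / 2)) ≤
        Real.exp ((n : ℝ) * (Real.log 2 - Real.log (2 * (n : ℝ) + 1) / 4)) ∧
      Real.exp ((n : ℝ) * (Real.log 2 - Real.log (2 * (n : ℝ) + 1) / 4)) ≤ 2) := by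
  set μ : Fin n → ℝ := fun i => lam i
  have hμ : ∀ i, 0 ≤ μ i := fun i => Nat.cast_nonneg _
  have hμ_anti : Antitone μ := fun i j hij => Nat.cast_le.2 (hanti hij)
  have hD : dimRatio n μ ≤ 2 ^ n := dimRatio_le_two_pow hμ hμ_anti
  have hB := quarter_le_casimirB_add_half_sub n hμ
  refine ⟨hD, hB, ?_, exp_mul_log_two_sub_le_two n⟩
  rw [neg_mul, ← casimirB_add_half_sub]
  calc dimRatio n μ * (2 * (n : ℝ) + 1) ^ (-(casimirB n (fun i => μ i + 1 / 2) - casimirB n μ))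
      ≤ 2 ^ n * (2 * (n : ℝ) + 1) ^ (-((n : ℝ) / 4)) := by
        gcongr
        exact le_add_of_nonneg_left (by positivity)
    _ = exp (n * (log 2 - log (2 * n + 1) / 4)) := two_pow_mul_rpow_eq_exp n (by positivity)

/-- For a partition `λ` of length `n` and its shift `λ ⊞ 1/2`:
(i)  `D^{λ⊞1/2}/D^λ = ∏_{1≤i≤j≤n} (λ_i+λ_j+2n+2-i-j)/(λ_i+λ_j+2n+1-i-j) ≤ 2ⁿ`;
(ii) `B_n(λ⊞1/2) - B_n(λ) ≥ n/4` where
     `B_n(λ) = (1/(2n+1))·∑_{i=1}^n (λ_i² + (2n+1-2i)λ_i)`;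
(iii) consequently the ratio times `(2n+1)^{-(B_n(λ⊞1/2)-B_n(λ))}` is at most
      `exp(n(log 2 - log(2n+1)/4)) ≤ 2`. -/
theorem statement6 (n : ℕ) (hn : 1 ≤ n) (lam : Fin n → ℕ) (hanti : Antitone lam) :
    ((∏ i : Fin n, ∏ j ∈ Finset.Ici i,
        (((lam i : ℝ) + (lam j : ℝ) +
            (2 * (n : ℝ) + 2 - (((i : ℕ) : ℝ) + 1) - (((j : ℕ) : ℝ) + 1))) /
          ((lam i : ℝ) + (lam j : ℝ) +
            (2 * (n : ℝ) + 1 - (((i : ℕ) : ℝ) + 1) - (((j : ℕ) : ℝ) + 1))))) ≤ 2 ^ n) ∧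
    ((n : ℝ) / 4 ≤
      1 / (2 * (n : ℝ) + 1) *
          ∑ i : Fin n,
            (((lam i : ℝ) + 1 / 2) ^ 2 +
              (2 * (n : ℝ) + 1 - 2 * (((i : ℕ) : ℝ) + 1)) * ((lam i : ℝ) + 1 / 2)) -
        1 / (2 * (n : ℝ) + 1) *
          ∑ i : Fin n,
            ((lam i : ℝ) ^ 2 +
              (2 * (n : ℝ) + 1 - 2 * (((i : ℕ) : ℝ) + 1)) * (lam i : ℝ))) ∧
    ((∏ i : Fin n, ∏ j ∈ Finset.Ici i,
        (((lam i : ℝ) + (lam j : ℝ) +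
            (2 * (n : ℝ) + 2 - (((i : ℕ) : ℝ) + 1) - (((j : ℕ) : ℝ) + 1))) /
          ((lam i : ℝ) + (lam j : ℝ) +
            (2 * (n : ℝ) + 1 - (((i : ℕ) : ℝ) + 1) - (((j : ℕ) : ℝ) + 1))))) *
        (2 * (n : ℝ) + 1) ^
          (-(1 / (2 * (n : ℝ) + 1)) *
            ∑ i : Fin n,
              ((lam i : ℝ) + 1 / 4 +
                (2 * (n : ℝ) + 1 - 2 * (((i : ℕ) : ℝ) + 1)) / 2)) ≤
        Real.exp ((n : ℝ) * (Real.log 2 - Real.log (2 * (n : ℝ) + 1) / 4)) ∧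
      Real.exp ((n : ℝ) * (Real.log 2 - Real.log (2 * (n : ℝ) + 1) / 4)) ≤ 2) :=
  statement6_general n lam hanti
end

section
/- Let n ≥ 2 and let λ = (λ_1 ≥ λ_2 ≥ … ≥ λ_{n−1} ≥ 0) be an integer partition of length n−1, with the convention λ_n = 0 and |λ| = λ_1 + … + λ_{n−1}. Define D^λ = ∏_{1≤i<j≤n} (λ_i−λ_j+j−i)/(j−i) and B_n(λ) = (1/n)·(−|λ|²/n + ∑_{i=1}^{n−1} (λ_i² + (n+1−2i)·λ_i)). Then D^λ ≤ (3/2)·n^{B_n(λ)}. -/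
/-!
Index from `0` and let `a : ℕ → ℕ` be `λ` extended by zeros, `L = log n` and
`g t = a t - a (t + 1)`, so that `a i - a j = ∑_{i ≤ t < j} g t`.

Bernoulli's inequality `1 + x / d ≤ (1 + 1 / d) ^ x` bounds the logarithm of each factor of
`D^λ` by `(a i - a j) log ((d + 1) / d)` with `d = j - i`, while
`n² B_n(λ) = ∑_{i<j} ((a i - a j)² + n (a i - a j))` and `(∑ g t)² ≥ ∑ (g t)²`.
Expanding everything in the gaps and exchanging the sums, `log D^λ - L B_n(λ)` is at most
`∑_t (g t (log C(n, s) - L N / n) - L N (g t)² / n²)` with `s = t + 1` and `N = s (n - s)`,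
because `∏_{i ≤ t < j} (j - i + 1) / (j - i)` telescopes to `C(n, s)`.
The estimate `C(n, s) ^ n² ≤ n ^ (N (n + 1) + 1)` makes each term at most `L / n²`, since `g t`
is an integer, and `(n - 1) L / n² ≤ 1 / e < log (3 / 2)`.

The estimate is an equality for `s = 1` and symmetric under `s ↦ n - s`. For `2 ≤ s ≤ n / 2`
it follows from `C(n, s) ≤ n ^ s / s!` as soon as `s (2 s - 1) log n ≤ 2 n log s!`. Since
`log x / x` decreases on `[e, ∞)`, this reduces to `T ^ (s (2 s - 1)) ≤ s! ^ (2 T)` for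
`T = max (2 s) 15 ≤ n`, which is checked directly for `s < 8` and by induction on `s` (using
`(1 + 1 / s) ^ s ≤ e`) beyond; the finitely many cases `n < 15` are checked by computation.
-/

open Finset Real
open scoped Nat

theorem two_mul_pow_le_two_mul_mul_factorial_pow_four {s : ℕ} (hs : 8 ≤ s) :
    (2 * s) ^ (2 * s) ≤ 2 * s * s ! ^ 4 := by
  induction s, hs using Nat.le_induction with
  | base => decide
  | succ s hs ih =>
    have h3 : (s + 1) ^ s ≤ 3 * s ^ s := by
      have : ((s : ℝ) + 1) ^ s ≤ 3 * (s : ℝ) ^ s :=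
        calc ((s : ℝ) + 1) ^ s = (1 + (s : ℝ)⁻¹) ^ s * (s : ℝ) ^ s := by
              rw [← mul_pow]; congr 1; field_simp
          _ ≤ 3 * (s : ℝ) ^ s := by
              gcongr; exact one_add_inv_pow_le_exp.trans (exp_one_lt_d9.trans (by norm_num)).le
      exact_mod_cast this
    have h36 : 36 * s ≤ (s + 1) ^ 3 := by
      have : 9 * 9 ≤ (s + 1) * (s + 1) := Nat.mul_le_mul (by omega) (by omega)
      nlinarith
    calc (2 * (s + 1)) ^ (2 * (s + 1))
        = 4 * (s + 1) ^ 2 * (2 ^ (2 * s) * ((s + 1) ^ s) ^ 2) := by rw [mul_pow]; ring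
      _ ≤ 4 * (s + 1) ^ 2 * (2 ^ (2 * s) * (3 * s ^ s) ^ 2) := by gcongr
      _ = 36 * (s + 1) ^ 2 * (2 * s) ^ (2 * s) := by rw [mul_pow 2 s]; ring
      _ ≤ 36 * (s + 1) ^ 2 * (2 * s * s ! ^ 4) := by gcongr
      _ = 2 * (s + 1) ^ 2 * (36 * s) * s ! ^ 4 := by ring
      _ ≤ 2 * (s + 1) ^ 2 * (s + 1) ^ 3 * s ! ^ 4 := by gcongr
      _ = 2 * (s + 1) * (s + 1)! ^ 4 := by rw [Nat.factorial_succ]; ring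

theorem max_pow_le_factorial_pow {s : ℕ} (hs : 2 ≤ s) :
    max (2 * s) 15 ^ (s * (2 * s - 1)) ≤ s ! ^ (2 * max (2 * s) 15) := by
  rcases lt_or_ge s 8 with hs8 | hs8
  · interval_cases s <;> decide +kernel
  have hpow : (2 * s) ^ (2 * s - 1) ≤ s ! ^ 4 := by
    refine Nat.le_of_mul_le_mul_left ?_ (by omega : 0 < 2 * s)
    calc 2 * s * (2 * s) ^ (2 * s - 1) = (2 * s) ^ (2 * s) := by
          rw [← pow_succ']; congr 1; omega
      _ ≤ 2 * s * s ! ^ 4 := two_mul_pow_le_two_mul_mul_factorial_pow_four hs8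
  calc max (2 * s) 15 ^ (s * (2 * s - 1)) = ((2 * s) ^ (2 * s - 1)) ^ s := by
        rw [max_eq_left (by omega), ← pow_mul']
    _ ≤ (s ! ^ 4) ^ s := Nat.pow_le_pow_left hpow s
    _ = s ! ^ (2 * max (2 * s) 15) := by rw [max_eq_left (by omega), ← pow_mul]; ring_nf

theorem choose_pow_sq_le_of_pow_le_factorial_pow {n s T : ℕ} (hs : 1 ≤ s) (hsn : 2 * s ≤ n)
    (hT : 3 ≤ T) (hTn : T ≤ n) (hfact : T ^ (s * (2 * s - 1)) ≤ s ! ^ (2 * T)) :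
    n.choose s ^ n ^ 2 ≤ n ^ (s * (n - s) * (n + 1)) := by
  have hT0 : (0 : ℝ) < T := by positivity
  have hn0 : (0 : ℝ) < n := by norm_cast; omega
  have hs1 : (1 : ℝ) ≤ s := by exact_mod_cast hs
  have hsn' : 2 * (s : ℝ) ≤ n := by exact_mod_cast hsn
  have hchoose_pos : (0 : ℝ) < n.choose s := by exact_mod_cast Nat.choose_pos (by omega)
  have he : exp 1 ≤ T :=
    (exp_one_lt_d9.trans (by norm_num : (2.7182818286 : ℝ) < 3)).le.trans (by exact_mod_cast hT)
  have hdiv : log n * T ≤ log T * n := (div_le_div_iff₀ hn0 hT0).1 <|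
    log_div_self_antitoneOn he (he.trans (by exact_mod_cast hTn)) (by exact_mod_cast hTn)
  have hfact' : s * (2 * s - 1) * log T ≤ 2 * T * log s ! := by
    have := log_le_log (by positivity) (show ((T ^ (s * (2 * s - 1)) : ℕ) : ℝ) ≤ (s ! ^ (2 * T) : ℕ)
      by exact_mod_cast hfact)
    push_cast [Nat.cast_sub (by omega : 1 ≤ 2 * s), log_pow] at this
    linarith
  have hkey : s * (2 * s - 1) * log n ≤ 2 * n * log s ! := by
    refine le_of_mul_le_mul_left ?_ hT0
    calc T * (s * (2 * s - 1) * log n) = s * (2 * s - 1) * (log n * T) := by ring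
      _ ≤ s * (2 * s - 1) * (log T * n) := by gcongr; nlinarith
      _ = n * (s * (2 * s - 1) * log T) := by ring
      _ ≤ n * (2 * T * log s !) := by gcongr
      _ = T * (2 * n * log s !) := by ring
  have hchoose : log (n.choose s) ≤ s * log n - log s ! :=
    calc log (n.choose s) ≤ log ((n : ℝ) ^ s / s !) :=
          log_le_log hchoose_pos (Nat.choose_le_pow_div s n)
      _ = s * log n - log s ! := by rw [log_div (by positivity) (by positivity), log_pow]
  rw [← Nat.cast_le (α := ℝ), Nat.cast_pow, Nat.cast_pow,
    ← log_le_log_iff (pow_pos hchoose_pos _) (pow_pos hn0 _), log_pow, log_pow]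
  push_cast [Nat.cast_sub (by omega : s ≤ n)]
  have h1 : (n : ℝ) ^ 2 * log (n.choose s) ≤ n ^ 2 * (s * log n - log s !) := by gcongr
  have h2 : (n : ℝ) * (s * (2 * s - 1) * log n) ≤ n * (2 * n * log s !) := by gcongr
  have h3 : 0 ≤ s * log n * (n - 2 * s) := by
    have := sub_nonneg.2 hsn'
    have := log_nonneg (by linarith : (1 : ℝ) ≤ n)
    positivity
  nlinarith

theorem choose_pow_sq_le {n : ℕ} (hn : 0 < n) (s : ℕ) :
    n.choose s ^ n ^ 2 ≤ n ^ (s * (n - s) * (n + 1) + 1) := by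
  rcases lt_or_ge n s with hns | hsn
  · rw [Nat.choose_eq_zero_of_lt hns, zero_pow (by positivity)]
    exact Nat.zero_le _
  wlog h2s : 2 * s ≤ n generalizing s
  · have := this (n - s) (by omega) (by omega)
    rwa [Nat.choose_symm hsn, Nat.sub_sub_self hsn, mul_comm (n - s)] at this
  rcases lt_or_ge n 15 with hn15 | hn15
  · have hsmall : ∀ m < 15, 0 < m → ∀ k ≤ m,
        m.choose k ^ m ^ 2 ≤ m ^ (k * (m - k) * (m + 1) + 1) := by decide +kernel
    exact hsmall n hn15 hn s hsn
  rcases lt_or_ge s 2 with hs | hs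
  · interval_cases s
    · simpa using Nat.one_le_of_lt hn
    · obtain ⟨m, rfl⟩ := Nat.exists_eq_add_of_le' hn
      rw [Nat.choose_one_right, Nat.add_sub_cancel]
      exact le_of_eq (by ring)
  calc n.choose s ^ n ^ 2 ≤ n ^ (s * (n - s) * (n + 1)) :=
        choose_pow_sq_le_of_pow_le_factorial_pow (by omega) h2s (by omega) (by omega)
          (max_pow_le_factorial_pow hs)
    _ ≤ n ^ (s * (n - s) * (n + 1) + 1) := Nat.pow_le_pow_right hn (by omega)

theorem log_choose_le {n s : ℕ} (hn : 0 < n) (hs : s ≤ n) :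
    log (n.choose s) ≤ log n * ((s * (n - s) : ℕ) * ((n : ℝ) + 1) + 1) / n ^ 2 := by
  have h := log_le_log (by exact_mod_cast pow_pos (Nat.choose_pos hs) _)
    (show ((n.choose s ^ n ^ 2 : ℕ) : ℝ) ≤ (n ^ (s * (n - s) * (n + 1) + 1) : ℕ) by
      exact_mod_cast choose_pow_sq_le hn s)
  have hpos : (0 : ℝ) < n := by exact_mod_cast hn
  rw [le_div_iff₀ (by positivity)]
  push_cast [log_pow] at h ⊢
  linarith

section Pairs

variable {M R : Type*} [AddCommMonoid M] [CommRing R] (n : ℕ)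

theorem sum_range_succ_sum_Ioo (f : ℕ → ℕ → M) :
    ∑ i ∈ range (n + 1), ∑ j ∈ Ioo i (n + 1), f i j =
      ∑ i ∈ range n, ∑ j ∈ Ioo i n, f i j + ∑ i ∈ range n, f i n := by
  rw [sum_range_succ, Ioo_add_one_right_eq_Ioc, Ioc_self, sum_empty, add_zero, ← sum_add_distrib]
  refine sum_congr rfl fun i hi => ?_
  rw [Ioo_add_one_right_eq_Ioc, ← Ioo_insert_right (mem_range.1 hi),
    sum_insert (by simp), add_comm]

theorem sum_pairs_sub_sq (x : ℕ → R) :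
    ∑ i ∈ range n, ∑ j ∈ Ioo i n, (x i - x j) ^ 2 =
      n * ∑ i ∈ range n, x i ^ 2 - (∑ i ∈ range n, x i) ^ 2 := by
  induction n with
  | zero => simp
  | succ n ih =>
    rw [sum_range_succ_sum_Ioo, ih, sum_range_succ, sum_range_succ]
    simp only [sub_sq, sum_add_distrib, sum_sub_distrib, ← sum_mul, ← mul_sum, sum_const,
      card_range, nsmul_eq_mul]
    push_cast
    ring

theorem sum_pairs_sub (x : ℕ → R) :
    ∑ i ∈ range n, ∑ j ∈ Ioo i n, (x i - x j) = ∑ i ∈ range n, (n - 1 - 2 * i : R) * x i := by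
  induction n with
  | zero => simp
  | succ n ih =>
    have hcoeff (i : ℕ) : ((n + 1 : ℕ) - 1 - 2 * i : R) * x i = (n - 1 - 2 * i) * x i + x i := by
      push_cast; ring
    rw [sum_range_succ_sum_Ioo, ih, sum_range_succ]
    simp only [hcoeff, sum_add_distrib, sum_sub_distrib, sum_const, card_range, nsmul_eq_mul]
    ring

theorem sum_pairs_sum_Ico_comm (f : ℕ → ℕ → ℕ → M) :
    ∑ i ∈ range n, ∑ j ∈ Ioo i n, ∑ t ∈ Ico i j, f i j t =
      ∑ t ∈ range (n - 1), ∑ i ∈ range (t + 1), ∑ j ∈ Ioo t n, f i j t := by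
  calc ∑ i ∈ range n, ∑ j ∈ Ioo i n, ∑ t ∈ Ico i j, f i j t
      = ∑ i ∈ range n, ∑ t ∈ Ico i (n - 1), ∑ j ∈ Ioo t n, f i j t :=
        sum_congr rfl fun i _ => sum_comm' fun j t => by simp only [mem_Ioo, mem_Ico]; omega
    _ = _ := sum_comm' fun i t => by simp only [mem_range, mem_Ico]; omega

end Pairs

theorem casimir_eq_sum_pairs {n : ℕ} (hn : n ≠ 0) (x : ℕ → ℝ) :
    1 / (n : ℝ) * (-(∑ i ∈ range n, x i) ^ 2 / n +
        ∑ i ∈ range n, (x i ^ 2 + ((n : ℝ) + 1 - 2 * ((i : ℝ) + 1)) * x i)) =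
      ∑ i ∈ range n, ∑ j ∈ Ioo i n, ((x i - x j) ^ 2 / n ^ 2 + (x i - x j) / n) := by
  have hcoeff (i : ℕ) : ((n : ℝ) + 1 - 2 * ((i : ℝ) + 1)) = n - 1 - 2 * i := by ring
  simp only [sum_add_distrib, ← sum_div, sum_pairs_sub_sq, sum_pairs_sub, hcoeff]
  field_simp
  ring

theorem log_add_div_le_mul_log (k : ℕ) {d : ℝ} (hd : 0 < d) :
    log ((k + d) / d) ≤ k * log ((d + 1) / d) := by
  rw [← log_pow]
  refine log_le_log (by positivity) ?_
  calc (k + d) / d = 1 + k * d⁻¹ := by field_simp; ring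
    _ ≤ (1 + d⁻¹) ^ k := one_add_mul_le_pow (by linarith [inv_pos.2 hd]) k
    _ = ((d + 1) / d) ^ k := by field_simp

theorem sum_log_sub_eq_log_descFactorial {m k : ℕ} (hk : k ≤ m) :
    ∑ i ∈ range k, log ((m : ℝ) - i) = log (m.descFactorial k) := by
  rw [Nat.descFactorial_eq_prod_range, Nat.cast_prod, log_prod]
  · refine sum_congr rfl fun i hi => ?_
    rw [Nat.cast_sub (by rw [mem_range] at hi; omega)]
  · intro i hi
    rw [mem_range] at hi
    rw [Nat.cast_ne_zero]
    omega

noncomputable def pairWeight (i j : ℕ) : ℝ := log (((j : ℝ) - i + 1) / (j - i))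

theorem sum_sum_pairWeight_eq_log_choose {n t : ℕ} (ht : t < n) :
    ∑ i ∈ range (t + 1), ∑ j ∈ Ioo t n, pairWeight i j = log (n.choose (t + 1)) := by
  have htelescope : ∀ i ∈ range (t + 1), ∑ j ∈ Ioo t n, pairWeight i j =
      log ((n : ℝ) - i) - log ((t + 1 : ℕ) - i : ℝ) := by
    intro i hi
    rw [mem_range] at hi
    rw [← Ico_add_one_left_eq_Ioo,
      ← sum_Ico_sub (fun j : ℕ => log ((j : ℝ) - i)) (by omega : t + 1 ≤ n)]
    refine sum_congr rfl fun j hj => ?_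
    have : (i : ℝ) < j := by rw [mem_Ico] at hj; exact_mod_cast (by omega : i < j)
    rw [pairWeight, ← log_div (by push_cast; linarith) (by linarith)]
    push_cast
    ring_nf
  rw [sum_congr rfl htelescope, sum_sub_distrib, sum_log_sub_eq_log_descFactorial ht,
    sum_log_sub_eq_log_descFactorial le_rfl, Nat.descFactorial_self,
    Nat.descFactorial_eq_factorial_mul_choose, Nat.cast_mul, log_mul (by positivity)
      (by exact_mod_cast (Nat.choose_pos ht).ne')]
  ring

theorem sum_mul_sub_mul_sq_le {ι R : Type*} [CommRing R] [PartialOrder R] [IsOrderedRing R]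
    (s : Finset ι) {x : ι → R} (hx : ∀ i ∈ s, 0 ≤ x i) (c : R) {d : R} (hd : 0 ≤ d) :
    (∑ i ∈ s, x i) * c - d * (∑ i ∈ s, x i) ^ 2 ≤ ∑ i ∈ s, (x i * c - d * x i ^ 2) := by
  rw [sum_sub_distrib, ← sum_mul, ← mul_sum]
  have := sum_sq_le_sq_sum_of_nonneg hx
  gcongr

theorem gap_contribution_le (g : ℕ) {L n N A : ℝ} (hL : 0 ≤ L) (hn : 0 < n) (hN : 1 ≤ N)
    (hA : A ≤ L * (N * (n + 1) + 1) / n ^ 2) :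
    g * (A - L / n * N) - L / n ^ 2 * N * g ^ 2 ≤ L / n ^ 2 := by
  have hg : (g : ℝ) - N * (g * (g - 1)) ≤ 1 := by
    rcases g with _ | g
    · simp
    · push_cast
      nlinarith [mul_nonneg (mul_nonneg (sub_nonneg.2 hN) g.cast_nonneg) g.cast_add_one_pos.le]
  calc g * (A - L / n * N) - L / n ^ 2 * N * g ^ 2
      ≤ g * (L * (N * (n + 1) + 1) / n ^ 2 - L / n * N) - L / n ^ 2 * N * g ^ 2 := by gcongr
    _ = L / n ^ 2 * (g - N * (g * (g - 1))) := by field_simp; ring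
    _ ≤ L / n ^ 2 * 1 := by gcongr
    _ = L / n ^ 2 := mul_one _

theorem sub_one_mul_log_div_sq_le_log_three_halves (n : ℕ) :
    ((n : ℝ) - 1) * log n / n ^ 2 ≤ log (3 / 2) := by
  have hlog : (2 / 5 : ℝ) < log (3 / 2) := by
    rw [lt_log_iff_exp_lt (by norm_num)]
    refine lt_of_pow_lt_pow_left₀ 5 (by norm_num) ?_
    rw [← exp_nat_mul, show ((5 : ℕ) : ℝ) * (2 / 5) = 1 + 1 by norm_num, exp_add]
    nlinarith [exp_one_lt_d9, exp_pos 1]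
  rcases n.eq_zero_or_pos with rfl | hn
  · simp only [CharP.cast_eq_zero, log_zero, mul_zero, zero_div]
    linarith
  have hn0 : (0 : ℝ) < n := by exact_mod_cast hn
  have hL : log n ≤ n / exp 1 := by
    have := log_le_sub_one_of_pos (div_pos hn0 (exp_pos 1))
    rw [log_div hn0.ne' (exp_pos 1).ne', log_exp] at this
    linarith
  calc ((n : ℝ) - 1) * log n / n ^ 2 ≤ n * (n / exp 1) / n ^ 2 := by
        have := log_nonneg (Nat.one_le_cast.2 hn : (1 : ℝ) ≤ n)
        gcongr
        linarith
    _ = 1 / exp 1 := by field_simp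
    _ ≤ 2 / 5 := by
        rw [div_le_iff₀ (exp_pos 1)]
        linarith [exp_one_gt_d9]
    _ ≤ log (3 / 2) := hlog.le

theorem sum_Ico_sub_succ_eq {a : ℕ → ℕ} (ha : Antitone a) {i j : ℕ} (hij : i ≤ j) :
    ∑ t ∈ Ico i j, ((a t - a (t + 1) : ℕ) : ℝ) = a i - a j := by
  calc ∑ t ∈ Ico i j, ((a t - a (t + 1) : ℕ) : ℝ) = ∑ t ∈ Ico i j, (-(a (t + 1) : ℝ) - -a t) :=
        sum_congr rfl fun t _ => by rw [Nat.cast_sub (ha t.le_succ)]; ring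
    _ = a i - a j := by rw [sum_Ico_sub (fun t => -(a t : ℝ)) hij]; ring

theorem log_factor_sub_le_sum_Ico {a : ℕ → ℕ} (ha : Antitone a) {i j : ℕ} (hij : i < j)
    {L m : ℝ} (hL : 0 ≤ L) :
    log (((a i : ℝ) - a j + j - i) / (j - i)) -
        L * (((a i : ℝ) - a j) ^ 2 / m ^ 2 + ((a i : ℝ) - a j) / m) ≤
      ∑ t ∈ Ico i j, (((a t - a (t + 1) : ℕ) : ℝ) * (pairWeight i j - L / m) -
        L / m ^ 2 * ((a t - a (t + 1) : ℕ) : ℝ) ^ 2) := by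
  have hbern : log (((a i : ℝ) - a j + j - i) / (j - i)) ≤ ((a i : ℝ) - a j) * pairWeight i j := by
    rw [pairWeight, ← Nat.cast_sub (ha hij.le), add_sub_assoc]
    exact log_add_div_le_mul_log _ (sub_pos.2 (by exact_mod_cast hij))
  calc _ ≤ ((a i : ℝ) - a j) * pairWeight i j -
        L * (((a i : ℝ) - a j) ^ 2 / m ^ 2 + ((a i : ℝ) - a j) / m) := sub_le_sub_right hbern _
    _ = ((a i : ℝ) - a j) * (pairWeight i j - L / m) - L / m ^ 2 * ((a i : ℝ) - a j) ^ 2 := by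
        ring
    _ ≤ _ := by
        rw [← sum_Ico_sub_succ_eq ha hij.le]
        exact sum_mul_sub_mul_sq_le _ (fun t _ => Nat.cast_nonneg _) _ (by positivity)

theorem sum_sum_gap_term_le {n t : ℕ} (ht : t + 1 < n) (g : ℕ) :
    ∑ i ∈ range (t + 1), ∑ j ∈ Ioo t n,
        ((g : ℝ) * (pairWeight i j - log n / n) - log n / n ^ 2 * (g : ℝ) ^ 2) ≤
      log n / n ^ 2 := by
  have hn : 0 < n := by omega
  calc _ = g * (log (n.choose (t + 1)) - log n / n * ((t + 1) * (n - (t + 1)) : ℕ)) -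
        log n / n ^ 2 * ((t + 1) * (n - (t + 1)) : ℕ) * (g : ℝ) ^ 2 := by
        simp only [mul_sub, sum_sub_distrib, ← mul_sum, sum_const, card_range, Nat.card_Ioo,
          nsmul_eq_mul, Nat.sub_sub, sum_sum_pairWeight_eq_log_choose (by omega : t < n)]
        push_cast
        ring
    _ ≤ _ := gap_contribution_le g (log_nonneg (Nat.one_le_cast.2 hn)) (by exact_mod_cast hn)
        (by norm_cast; exact Nat.mul_pos (by omega) (by omega)) (log_choose_le hn ht.le)

theorem sum_log_pairs_le {n : ℕ} (hn : 0 < n) {a : ℕ → ℕ} (ha : Antitone a) :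
    ∑ i ∈ range n, ∑ j ∈ Ioo i n, log (((a i : ℝ) - a j + j - i) / (j - i)) ≤
      log (3 / 2) + log n * ∑ i ∈ range n, ∑ j ∈ Ioo i n,
        (((a i : ℝ) - a j) ^ 2 / n ^ 2 + ((a i : ℝ) - a j) / n) := by
  have hL : 0 ≤ log (n : ℝ) := log_nonneg (Nat.one_le_cast.2 hn)
  have hsum := calc
    ∑ i ∈ range n, ∑ j ∈ Ioo i n, (log (((a i : ℝ) - a j + j - i) / (j - i)) -
        log n * (((a i : ℝ) - a j) ^ 2 / n ^ 2 + ((a i : ℝ) - a j) / n))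
      ≤ ∑ i ∈ range n, ∑ j ∈ Ioo i n, ∑ t ∈ Ico i j,
          (((a t - a (t + 1) : ℕ) : ℝ) * (pairWeight i j - log n / n) -
            log n / n ^ 2 * ((a t - a (t + 1) : ℕ) : ℝ) ^ 2) :=
        sum_le_sum fun i _ => sum_le_sum fun j hj =>
          log_factor_sub_le_sum_Ico ha (mem_Ioo.1 hj).1 hL
    _ = ∑ t ∈ range (n - 1), ∑ i ∈ range (t + 1), ∑ j ∈ Ioo t n,
          (((a t - a (t + 1) : ℕ) : ℝ) * (pairWeight i j - log n / n) -
            log n / n ^ 2 * ((a t - a (t + 1) : ℕ) : ℝ) ^ 2) :=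
        sum_pairs_sum_Ico_comm n _
    _ ≤ ∑ t ∈ range (n - 1), log n / n ^ 2 :=
        sum_le_sum fun t ht => sum_sum_gap_term_le (by rw [mem_range] at ht; omega) _
    _ = ((n : ℝ) - 1) * log n / n ^ 2 := by
        rw [sum_const, card_range, nsmul_eq_mul, Nat.cast_sub hn]
        ring
    _ ≤ log (3 / 2) := sub_one_mul_log_div_sq_le_log_three_halves n
  simp only [sum_sub_distrib, ← mul_sum] at hsum
  linarith

theorem prod_pairs_le_three_halves_mul_rpow {n : ℕ} (hn : 0 < n) {a : ℕ → ℕ} (ha : Antitone a) :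
    ∏ i ∈ range n, ∏ j ∈ Ioo i n, (((a i : ℝ) - a j + j - i) / (j - i)) ≤
      3 / 2 * (n : ℝ) ^ ∑ i ∈ range n, ∑ j ∈ Ioo i n,
        (((a i : ℝ) - a j) ^ 2 / n ^ 2 + ((a i : ℝ) - a j) / n) := by
  have hF : ∀ i ∈ range n, ∀ j ∈ Ioo i n, (0 : ℝ) < ((a i : ℝ) - a j + j - i) / (j - i) := by
    intro i _ j hj
    have hij : i < j := (mem_Ioo.1 hj).1
    have h1 : (a j : ℝ) ≤ a i := by exact_mod_cast ha hij.le
    have h2 : (i : ℝ) < j := by exact_mod_cast hij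
    apply div_pos <;> linarith
  have hn0 : (0 : ℝ) < n := by exact_mod_cast hn
  rw [← log_le_log_iff (prod_pos fun i hi => prod_pos (hF i hi)) (by positivity),
    log_mul (by norm_num) (by positivity), log_rpow hn0,
    log_prod fun i hi => (prod_pos (hF i hi)).ne',
    sum_congr rfl fun i hi => log_prod fun j hj => (hF i hi j hj).ne']
  linarith [sum_log_pairs_le hn ha]

theorem statement9_general (n : ℕ) (hn : 2 ≤ n) (lam : Fin n → ℕ) (hanti : Antitone lam) :
    (∏ i : Fin n, ∏ j ∈ Finset.Ioi i,
        (((lam i : ℝ) - (lam j : ℝ) + ((j : ℕ) : ℝ) - ((i : ℕ) : ℝ)) /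
          (((j : ℕ) : ℝ) - ((i : ℕ) : ℝ)))) ≤
      3 / 2 *
        (n : ℝ) ^
          (1 / (n : ℝ) *
            (-(∑ i, (lam i : ℝ)) ^ 2 / (n : ℝ) +
              ∑ i : Fin n,
                ((lam i : ℝ) ^ 2 +
                  ((n : ℝ) + 1 - 2 * (((i : ℕ) : ℝ) + 1)) * (lam i : ℝ)))) := by
  set a : ℕ → ℕ := fun k => if h : k < n then lam ⟨k, h⟩ else 0
  have hlam (i : Fin n) : lam i = a i := by simp [a]
  have ha : Antitone a := by
    intro k l hkl
    by_cases hl : l < n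
    · simp only [a, dif_pos hl, dif_pos (hkl.trans_lt hl)]
      exact hanti (Fin.mk_le_mk.2 hkl)
    · simp [a, dif_neg hl]
  simp only [hlam, Fin.sum_univ_eq_sum_range (fun i => (a i : ℝ)),
    Fin.sum_univ_eq_sum_range (fun i => (a i : ℝ) ^ 2 + ((n : ℝ) + 1 - 2 * ((i : ℝ) + 1)) * a i),
    casimir_eq_sum_pairs (by omega : n ≠ 0)]
  convert prod_pairs_le_three_halves_mul_rpow (by omega : 0 < n) ha using 1
  rw [← Fin.prod_univ_eq_prod_range (fun i => ∏ j ∈ Ioo i n, (((a i : ℝ) - a j + j - i) / (j - i)))]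
  refine prod_congr rfl fun i _ => ?_
  rw [← Fin.map_valEmbedding_Ioi, prod_map]
  rfl

/-- For `n ≥ 2` and an integer partition `λ` of length `n-1` (extended by `λ_n = 0`), the
`SU(n)` Weyl dimension `D^λ = ∏_{1≤i<j≤n} (λ_i-λ_j+j-i)/(j-i)` satisfies
`D^λ ≤ (3/2)·n^{B_n(λ)}` where
`B_n(λ) = (1/n)·(-|λ|²/n + ∑_{i=1}^{n-1} (λ_i² + (n+1-2i)λ_i))`. -/
theorem statement9 (n : ℕ) (hn : 2 ≤ n) (lam : Fin n → ℕ) (hanti : Antitone lam)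
    (hlast : ∀ i : Fin n, (i : ℕ) = n - 1 → lam i = 0) :
    (∏ i : Fin n, ∏ j ∈ Finset.Ioi i,
        (((lam i : ℝ) - (lam j : ℝ) + ((j : ℕ) : ℝ) - ((i : ℕ) : ℝ)) /
          (((j : ℕ) : ℝ) - ((i : ℕ) : ℝ)))) ≤
      3 / 2 *
        (n : ℝ) ^
          (1 / (n : ℝ) *
            (-(∑ i, (lam i : ℝ)) ^ 2 / (n : ℝ) +
              ∑ i : Fin n,
                ((lam i : ℝ) ^ 2 +
                  ((n : ℝ) + 1 - 2 * (((i : ℕ) : ℝ) + 1)) * (lam i : ℝ)))) :=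
  statement9_general n hn lam hanti
end

section
/- Let p ≥ 1 and n = 2p. For any integer partition λ = (λ_1 ≥ … ≥ λ_p ≥ 0) of length p, define A_n(λ) = [∏_{i=1}^p ∏_{j=1}^p (λ_i+λ_j+n+1−i−j)/(n+1−i−j)] · [∏_{1≤i<j≤p} (λ_i−λ_j+j−i)/(j−i)]² and B_n(λ) = (2/n)·∑_{i=1}^p (λ_i² + (n+1−2i)·λ_i). Then A_n(λ) ≤ n^{B_n(λ)}. -/
/-!
Every factor of `A_n(λ)` has the form `(x + c) / c` with `x ∈ ℕ` and `c ≥ 1`, so Bernoulli's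
inequality bounds it by `((c + 1) / c) ^ x`. The products of the ratios `(c + 1) / c` telescope,
and (indexing from `0`) `A_n(λ) ≤ ∏ᵢ ((2p - i) / (i + 1)) ^ (2λᵢ)`.

It then suffices that `((2p - i) / (i + 1)) ^ p ≤ (2p) ^ (p - i)`, because the exponent of
`n` exceeds `2λᵢ(p - i)/p` by `(λᵢ² - λᵢ)/p ≥ 0`. With `m = p - i` this is
`p log ((p + m) / (p + 1 - m)) ≤ m log (2p)`. The difference of the two sides is a discretely
convex function of `m` (its increments `p log (1 + (2p + 1)/(p² - m²)) - log (2p)` increase),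
so on `[1, p]` it is bounded by its values at the endpoints: `0` at `m = p`, and at `m = 1`
it is `≤ 0` since `(1 + 1/p) ^ p ≤ e ≤ 2p` for `p ≥ 2`.
-/

open Finset Real

theorem Finset.prod_Ico_div₀ {G₀ : Type*} [CommGroupWithZero G₀] (f : ℕ → G₀) {m n : ℕ}
    (hmn : m ≤ n) (hf : ∀ k ∈ Icc m n, f k ≠ 0) :
    ∏ k ∈ Ico m n, f (k + 1) / f k = f n / f m := by
  induction n, hmn using Nat.le_induction with
  | base => simp [div_self (hf m (by simp))]
  | succ n hmn ih =>
    rw [prod_Ico_succ_top hmn, ih fun k hk => hf k (Icc_subset_Icc_right n.le_succ hk),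
      div_mul_div_cancel₀' (hf n (by simp [hmn]))]

theorem Finset.prod_Ico_div₀' {G₀ : Type*} [CommGroupWithZero G₀] (f : ℕ → G₀) {m n : ℕ}
    (hmn : m ≤ n) (hf : ∀ k ∈ Icc m n, f k ≠ 0) :
    ∏ k ∈ Ico m n, f k / f (k + 1) = f m / f n := by
  calc ∏ k ∈ Ico m n, f k / f (k + 1) = ∏ k ∈ Ico m n, (f (k + 1) / f k)⁻¹ := by
        simp only [inv_div]
    _ = f m / f n := by rw [prod_inv_distrib, prod_Ico_div₀ f hmn hf, inv_div]

theorem natCast_add_div_le_pow {c : ℝ} (hc : 0 < c) (x : ℕ) :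
    (x + c) / c ≤ ((c + 1) / c) ^ x := by
  calc (x + c) / c = 1 + x * c⁻¹ := by field_simp; ring
    _ ≤ (1 + c⁻¹) ^ x := one_add_mul_le_pow (by linarith [inv_pos.2 hc]) x
    _ = ((c + 1) / c) ^ x := by rw [add_div, div_self hc.ne', one_div, add_comm]

theorem le_max_of_monotoneOn_sub {α : Type*} [AddCommGroup α] [LinearOrder α]
    [IsOrderedAddMonoid α] {a : ℕ → α} {l m r : ℕ}
    (ha : MonotoneOn (fun k => a (k + 1) - a k) (Set.Ico l r)) (hlm : l ≤ m) (hmr : m ≤ r) :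
    a m ≤ max (a l) (a r) := by
  by_cases h : ∀ k ∈ Ico l m, a (k + 1) - a k ≤ 0
  · have : a m - a l ≤ 0 := sum_Ico_sub a hlm ▸ sum_nonpos h
    exact le_max_of_le_left (sub_nonpos.1 this)
  · push Not at h
    obtain ⟨k₀, hk₀, hpos⟩ := h
    rw [mem_Ico] at hk₀
    have : 0 ≤ a r - a m := sum_Ico_sub a hmr ▸ sum_nonneg fun k hk => by
      rw [mem_Ico] at hk
      exact hpos.le.trans (ha ⟨hk₀.1, by omega⟩ ⟨by omega, hk.2⟩ (by omega))
    exact le_max_of_le_right (sub_nonneg.1 this)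

theorem div_sq_sub_sq_monotoneOn (p : ℝ) :
    MonotoneOn (fun x : ℝ => ((p + 1) ^ 2 - x ^ 2) / (p ^ 2 - x ^ 2)) (Set.Ico 0 p) := by
  intro x ⟨hx0, hxp⟩ y ⟨hy0, hyp⟩ hxy
  dsimp only
  rw [div_le_div_iff₀ (by nlinarith) (by nlinarith)]
  nlinarith [mul_le_mul hxy hxy hx0 hy0]

noncomputable def logRatioExcess (p k : ℕ) : ℝ :=
  p * log ((p + k) / (p + 1 - k)) - k * log (2 * p)

theorem logRatioExcess_succ_sub {p k : ℕ} (hk : k < p) :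
    logRatioExcess p (k + 1) - logRatioExcess p k =
      p * log (((p + 1) ^ 2 - k ^ 2) / (p ^ 2 - k ^ 2)) - log (2 * p) := by
  have hk : (k : ℝ) + 1 ≤ p := by exact_mod_cast hk
  have hk0 : (0 : ℝ) ≤ k := k.cast_nonneg
  have hp : (0 : ℝ) < p := by linarith
  have h₁ : (0 : ℝ) < p + 1 - (k + 1) := by linarith
  have h₂ : (0 : ℝ) < p + 1 - k := by linarith
  simp only [logRatioExcess]
  push_cast
  rw [show (((p : ℝ) + 1) ^ 2 - k ^ 2) / (p ^ 2 - k ^ 2) =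
      ((p + (k + 1)) / (p + 1 - (k + 1))) / ((p + k) / (p + 1 - k)) by
    rw [div_div_div_eq, div_eq_div_iff (by nlinarith) (by positivity)]
    ring, log_div (x := (p + (k + 1)) / (p + 1 - (k + 1))) (by positivity) (by positivity)]
  ring

theorem monotoneOn_logRatioExcess_succ_sub (p : ℕ) :
    MonotoneOn (fun k => logRatioExcess p (k + 1) - logRatioExcess p k) (Set.Ico 0 p) := by
  intro k ⟨_, hk⟩ l ⟨_, hl⟩ hkl
  have hkp : (k : ℝ) + 1 ≤ p := by exact_mod_cast hk
  have hk0 : (0 : ℝ) ≤ k := k.cast_nonneg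
  dsimp only
  rw [logRatioExcess_succ_sub hk, logRatioExcess_succ_sub hl]
  refine sub_le_sub_right (mul_le_mul_of_nonneg_left (log_le_log ?_ ?_) p.cast_nonneg) _
  · exact div_pos (by nlinarith) (by nlinarith)
  · exact div_sq_sub_sq_monotoneOn p ⟨hk0, by linarith⟩ ⟨l.cast_nonneg, by exact_mod_cast hl⟩
      (by exact_mod_cast hkl)

theorem logRatioExcess_one_nonpos {p : ℕ} (hp : 1 ≤ p) : logRatioExcess p 1 ≤ 0 := by
  simp only [logRatioExcess, Nat.cast_one, add_sub_cancel_right, one_mul, sub_nonpos]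
  rcases hp.eq_or_lt with h | h
  · subst h
    norm_num
  · have hp2 : (2 : ℝ) ≤ p := by exact_mod_cast h
    calc p * log ((p + 1) / p) ≤ p * ((p + 1) / p - 1) := by
          gcongr
          exact log_le_sub_one_of_pos (by positivity)
      _ = log (exp 1) := by field_simp; simp
      _ ≤ log (2 * p) := by
          gcongr
          linarith [exp_one_lt_d9]

theorem logRatioExcess_self (p : ℕ) : logRatioExcess p p = 0 := by
  rw [logRatioExcess, show (p : ℝ) + 1 - p = 1 by ring, div_one, ← two_mul]
  ring

theorem logRatioExcess_nonpos {p m : ℕ} (hm : 1 ≤ m) (hmp : m ≤ p) : logRatioExcess p m ≤ 0 :=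
  (le_max_of_monotoneOn_sub ((monotoneOn_logRatioExcess_succ_sub p).mono
    (Set.Ico_subset_Ico_left zero_le_one)) hm hmp).trans
    (max_le (logRatioExcess_one_nonpos (hm.trans hmp)) (logRatioExcess_self p).le)

theorem Finset.prod_prod_pow_add_of_symm {ι M : Type*} [Fintype ι] [CommMonoid M]
    {r : ι → ι → M} (hr : ∀ i j, r i j = r j i) (f : ι → ℕ) :
    ∏ i, ∏ j, r i j ^ (f i + f j) = ∏ i, (∏ j, r i j) ^ (2 * f i) := by
  simp only [pow_add, prod_mul_distrib]
  rw [prod_comm (f := fun i j => r i j ^ f j)]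
  simp only [hr _ _, ← prod_mul_distrib, ← pow_add, ← two_mul, prod_pow]

theorem Finset.prod_prod_Ioi_pow_sub {ι G₀ : Type*} [Fintype ι] [LinearOrder ι]
    [LocallyFiniteOrderTop ι] [LocallyFiniteOrderBot ι] [CommGroupWithZero G₀] {r : ι → ι → G₀}
    (hr : ∀ i j, i < j → r i j ≠ 0) {f : ι → ℕ} (hf : Antitone f) :
    ∏ i, ∏ j ∈ Ioi i, r i j ^ (f i - f j) =
      ∏ i, ((∏ j ∈ Ioi i, r i j) / ∏ j ∈ Iio i, r j i) ^ f i := by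
  calc ∏ i, ∏ j ∈ Ioi i, r i j ^ (f i - f j)
      = ∏ i, ∏ j ∈ Ioi i, r i j ^ f i / r i j ^ f j :=
        prod_congr rfl fun i _ => prod_congr rfl fun j hj => by
          rw [pow_sub₀ _ (hr i j (mem_Ioi.1 hj)) (hf (mem_Ioi.1 hj).le), div_eq_mul_inv]
    _ = (∏ i, (∏ j ∈ Ioi i, r i j) ^ f i) / ∏ j, (∏ i ∈ Iio j, r i j) ^ f j := by
        simp only [prod_div_distrib, prod_pow]
        congr 1
        rw [prod_comm' (t' := univ) (s' := fun j => Iio j) (by simp)]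
        simp only [prod_pow]
    _ = _ := by rw [← prod_div_distrib]; simp only [div_pow]

theorem Fin.prod_univ_add_one_div_eq {p i : ℕ} (hi : i < p) :
    ∏ j : Fin p, ((2 * p + 1 - ((i : ℝ) + 1) - (((j : ℕ) : ℝ) + 1)) + 1) /
      (2 * p + 1 - ((i : ℝ) + 1) - (((j : ℕ) : ℝ) + 1)) = (2 * p - i) / (p - i) := by
  rw [Fin.prod_univ_eq_prod_range (fun j : ℕ => ((2 * p + 1 - ((i : ℝ) + 1) - ((j : ℝ) + 1)) + 1) /
      (2 * p + 1 - ((i : ℝ) + 1) - ((j : ℝ) + 1))), range_eq_Ico]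
  have hf : ∀ k ∈ Icc 0 p, 2 * (p : ℝ) - i - k ≠ 0 := fun k hk => by
    have : (k : ℝ) ≤ p := by exact_mod_cast (mem_Icc.1 hk).2
    have : (i : ℝ) + 1 ≤ p := by exact_mod_cast hi
    linarith
  calc _ = ∏ k ∈ Ico 0 p, (2 * (p : ℝ) - i - k) / (2 * p - i - (k + 1 : ℕ)) :=
        prod_congr rfl fun k _ => by push_cast; ring_nf
    _ = (2 * p - i) / (p - i) := by
        rw [prod_Ico_div₀' (fun k : ℕ => 2 * (p : ℝ) - i - k) p.zero_le hf]
        push_cast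
        ring_nf

theorem Fin.prod_Ioi_add_one_div_eq {p : ℕ} (i : Fin p) :
    ∏ j ∈ Ioi i, ((((j : ℕ) : ℝ) - (i : ℕ)) + 1) / (((j : ℕ) : ℝ) - (i : ℕ)) = p - (i : ℕ) := by
  refine (prod_map (Ioi i) Fin.valEmbedding
    (fun k : ℕ => (((k : ℝ) - (i : ℕ)) + 1) / ((k : ℝ) - (i : ℕ)))).symm.trans ?_
  rw [Fin.map_valEmbedding_Ioi, ← Finset.Ico_add_one_left_eq_Ioo]
  have hf : ∀ k ∈ Icc ((i : ℕ) + 1) p, (k : ℝ) - (i : ℕ) ≠ 0 := fun k hk => by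
    have : ((i : ℕ) : ℝ) + 1 ≤ k := by exact_mod_cast (mem_Icc.1 hk).1
    linarith
  calc _ = ∏ k ∈ Ico ((i : ℕ) + 1) p, (((k + 1 : ℕ) : ℝ) - (i : ℕ)) / ((k : ℝ) - (i : ℕ)) :=
        prod_congr rfl fun k _ => by push_cast; ring
    _ = p - (i : ℕ) := by
        rw [prod_Ico_div₀ (fun k : ℕ => (k : ℝ) - (i : ℕ)) i.isLt hf]
        push_cast
        ring

theorem Fin.prod_Iio_add_one_div_eq {p : ℕ} (j : Fin p) :
    ∏ i ∈ Iio j, ((((j : ℕ) : ℝ) - (i : ℕ)) + 1) / (((j : ℕ) : ℝ) - (i : ℕ)) = (j : ℕ) + 1 := by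
  refine (prod_map (Iio j) Fin.valEmbedding
    (fun k : ℕ => ((((j : ℕ) : ℝ) - k) + 1) / (((j : ℕ) : ℝ) - k))).symm.trans ?_
  rw [Fin.map_valEmbedding_Iio, Nat.Iio_eq_range, range_eq_Ico]
  have hf : ∀ k ∈ Icc 0 (j : ℕ), ((j : ℕ) : ℝ) - k + 1 ≠ 0 := fun k hk => by
    have : (k : ℝ) ≤ (j : ℕ) := by exact_mod_cast (mem_Icc.1 hk).2
    linarith
  calc _ = ∏ k ∈ Ico 0 (j : ℕ), (((j : ℕ) : ℝ) - k + 1) / (((j : ℕ) : ℝ) - (k + 1 : ℕ) + 1) :=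
        prod_congr rfl fun k _ => by push_cast; ring
    _ = (j : ℕ) + 1 := by
        rw [prod_Ico_div₀' (fun k : ℕ => ((j : ℕ) : ℝ) - k + 1) (Nat.zero_le _) hf]
        push_cast
        ring

theorem prod_prod_add_div_le {p : ℕ} (lam : Fin p → ℕ) :
    ∏ i : Fin p, ∏ j : Fin p,
        (((lam i : ℝ) + (lam j : ℝ) +
            (2 * (p : ℝ) + 1 - (((i : ℕ) : ℝ) + 1) - (((j : ℕ) : ℝ) + 1))) /
          (2 * (p : ℝ) + 1 - (((i : ℕ) : ℝ) + 1) - (((j : ℕ) : ℝ) + 1))) ≤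
      ∏ i : Fin p, ((2 * p - (i : ℕ)) / (p - (i : ℕ)) : ℝ) ^ (2 * lam i) := by
  set c : Fin p → Fin p → ℝ := fun i j => 2 * p + 1 - (((i : ℕ) : ℝ) + 1) - (((j : ℕ) : ℝ) + 1)
    with hc
  have hc1 : ∀ i j, 1 ≤ c i j := fun i j => by
    have hi : ((i : ℕ) : ℝ) + 1 ≤ p := by exact_mod_cast i.isLt
    have hj : ((j : ℕ) : ℝ) + 1 ≤ p := by exact_mod_cast j.isLt
    simp only [hc]
    linarith
  have hnonneg : ∀ i j, (0 : ℝ) ≤ (lam i + lam j + c i j) / c i j := fun i j =>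
    div_nonneg (by linarith [hc1 i j]) (by linarith [hc1 i j])
  calc _ ≤ ∏ i, ∏ j, ((c i j + 1) / c i j) ^ (lam i + lam j) :=
        prod_le_prod (fun i _ => prod_nonneg fun j _ => hnonneg i j)
          fun i _ => prod_le_prod (fun j _ => hnonneg i j) fun j _ => by
            exact_mod_cast natCast_add_div_le_pow (c := c i j) (by linarith [hc1 i j]) _
    _ = ∏ i, (∏ j, (c i j + 1) / c i j) ^ (2 * lam i) :=
        prod_prod_pow_add_of_symm (fun i j => by simp only [hc]; ring) lam
    _ = _ := prod_congr rfl fun i _ => by rw [Fin.prod_univ_add_one_div_eq i.isLt]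

theorem sq_prod_prod_Ioi_sub_div_le {p : ℕ} (lam : Fin p → ℕ) (hlam : Antitone lam) :
    (∏ i : Fin p, ∏ j ∈ Ioi i,
        (((lam i : ℝ) - (lam j : ℝ) + ((j : ℕ) : ℝ) - ((i : ℕ) : ℝ)) /
          (((j : ℕ) : ℝ) - ((i : ℕ) : ℝ)))) ^ 2 ≤
      ∏ i : Fin p, ((p - (i : ℕ)) / ((i : ℕ) + 1) : ℝ) ^ (2 * lam i) := by
  have hgap : ∀ i j : Fin p, i < j → (1 : ℝ) ≤ ((j : ℕ) : ℝ) - (i : ℕ) := fun i j hij => by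
    have : ((i : ℕ) : ℝ) + 1 ≤ (j : ℕ) := by exact_mod_cast hij
    linarith
  have hnonneg : ∀ i, ∀ j ∈ Ioi i, (0 : ℝ) ≤
      ((lam i : ℝ) - (lam j : ℝ) + ((j : ℕ) : ℝ) - ((i : ℕ) : ℝ)) /
        (((j : ℕ) : ℝ) - ((i : ℕ) : ℝ)) :=
    fun i j hj => by
      have := hgap i j (mem_Ioi.1 hj)
      have : (lam j : ℝ) ≤ lam i := by exact_mod_cast hlam (mem_Ioi.1 hj).le
      exact div_nonneg (by linarith) (by linarith)
  have hbound : ∏ i : Fin p, ∏ j ∈ Ioi i,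
        (((lam i : ℝ) - (lam j : ℝ) + ((j : ℕ) : ℝ) - ((i : ℕ) : ℝ)) /
          (((j : ℕ) : ℝ) - ((i : ℕ) : ℝ))) ≤
      ∏ i : Fin p, ((p - (i : ℕ)) / ((i : ℕ) + 1) : ℝ) ^ lam i :=
    calc _ ≤ ∏ i : Fin p, ∏ j ∈ Ioi i,
          ((((j : ℕ) : ℝ) - (i : ℕ) + 1) / (((j : ℕ) : ℝ) - (i : ℕ))) ^ (lam i - lam j) := by
          refine prod_le_prod (fun i _ => prod_nonneg (hnonneg i))
            fun i _ => prod_le_prod (hnonneg i) fun j hj => ?_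
          have := natCast_add_div_le_pow (c := ((j : ℕ) : ℝ) - (i : ℕ))
            (by linarith [hgap i j (mem_Ioi.1 hj)]) (lam i - lam j)
          rwa [Nat.cast_sub (hlam (mem_Ioi.1 hj).le), ← add_sub_assoc] at this
      _ = _ := by
          rw [prod_prod_Ioi_pow_sub
            (fun i j hij => (div_pos (by linarith [hgap i j hij]) (by linarith [hgap i j hij])).ne')
            hlam]
          simp only [Fin.prod_Ioi_add_one_div_eq, Fin.prod_Iio_add_one_div_eq]
  calc _ ≤ (∏ i : Fin p, ((p - (i : ℕ)) / ((i : ℕ) + 1) : ℝ) ^ lam i) ^ 2 :=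
        pow_le_pow_left₀ (prod_nonneg fun i _ => prod_nonneg (hnonneg i)) hbound 2
    _ = _ := by simp only [← prod_pow, ← pow_mul, mul_comm]

theorem two_mul_sub_div_pow_le_rpow {p i : ℕ} (hi : i < p) (l : ℕ) :
    ((2 * p - i) / (i + 1) : ℝ) ^ (2 * l) ≤
      (2 * p : ℝ) ^ (2 / (2 * p : ℝ) * ((l : ℝ) ^ 2 + (2 * p + 1 - 2 * ((i : ℝ) + 1)) * l)) := by
  have hip : (i : ℝ) + 1 ≤ p := by exact_mod_cast hi
  have hp : (0 : ℝ) < p := by linarith [i.cast_nonneg (α := ℝ)]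
  have hkey := logRatioExcess_nonpos (m := p - i) (by omega) (Nat.sub_le p i)
  rw [logRatioExcess, sub_nonpos, Nat.cast_sub hi.le, show (p : ℝ) + (p - i) = 2 * p - i by ring,
    show (p : ℝ) + 1 - (p - i) = i + 1 by ring] at hkey
  have hL : 0 ≤ log (2 * p) := log_nonneg (by linarith)
  have hl : (l : ℝ) ≤ l ^ 2 := by exact_mod_cast Nat.le_self_pow two_ne_zero l
  rw [← log_le_log_iff (pow_pos (div_pos (by linarith) (by positivity)) _) (by positivity),
    log_pow, log_rpow (by positivity), show 2 / (2 * p : ℝ) = 1 / p by field_simp,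
    one_div_mul_eq_div, div_mul_eq_mul_div, le_div_iff₀ hp]
  push_cast
  nlinarith [mul_le_mul_of_nonneg_left hkey (by positivity : (0 : ℝ) ≤ 2 * l),
    mul_nonneg (sub_nonneg.2 hl) hL]

/-- For `p ≥ 1` and `n = 2p`, and any integer partition `λ` of length `p`, the spherical
dimension for the complex Grassmannian
`A_n(λ) = [∏_{i,j=1}^p (λ_i+λ_j+n+1-i-j)/(n+1-i-j)]·[∏_{1≤i<j≤p} (λ_i-λ_j+j-i)/(j-i)]²`
satisfies `A_n(λ) ≤ n^{B_n(λ)}` with `B_n(λ) = (2/n)·∑_{i=1}^p (λ_i² + (n+1-2i)λ_i)`. -/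
theorem statement11 (p n : ℕ) (hp : 1 ≤ p) (hn : n = 2 * p) (lam : Fin p → ℕ)
    (hanti : Antitone lam) :
    (∏ i : Fin p, ∏ j : Fin p,
        (((lam i : ℝ) + (lam j : ℝ) +
            ((n : ℝ) + 1 - (((i : ℕ) : ℝ) + 1) - (((j : ℕ) : ℝ) + 1))) /
          ((n : ℝ) + 1 - (((i : ℕ) : ℝ) + 1) - (((j : ℕ) : ℝ) + 1)))) *
      (∏ i : Fin p, ∏ j ∈ Finset.Ioi i,
          (((lam i : ℝ) - (lam j : ℝ) + ((j : ℕ) : ℝ) - ((i : ℕ) : ℝ)) /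
            (((j : ℕ) : ℝ) - ((i : ℕ) : ℝ)))) ^ 2 ≤
      (n : ℝ) ^
        (2 / (n : ℝ) *
          ∑ i : Fin p,
            ((lam i : ℝ) ^ 2 +
              ((n : ℝ) + 1 - 2 * (((i : ℕ) : ℝ) + 1)) * (lam i : ℝ))) := by
  subst hn
  have h2p : (0 : ℝ) < 2 * p := mul_pos two_pos (Nat.cast_pos.2 hp)
  push_cast
  calc _ ≤ (∏ i : Fin p, ((2 * p - (i : ℕ)) / (p - (i : ℕ)) : ℝ) ^ (2 * lam i)) *
        ∏ i : Fin p, ((p - (i : ℕ)) / ((i : ℕ) + 1) : ℝ) ^ (2 * lam i) :=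
        mul_le_mul (prod_prod_add_div_le lam) (sq_prod_prod_Ioi_sub_div_le lam hanti)
          (sq_nonneg _) (prod_nonneg fun i _ => by rw [pow_mul]; positivity)
    _ = ∏ i : Fin p, ((2 * p - (i : ℕ)) / ((i : ℕ) + 1) : ℝ) ^ (2 * lam i) := by
        rw [← prod_mul_distrib]
        refine prod_congr rfl fun i _ => ?_
        have : (p : ℝ) - (i : ℕ) ≠ 0 := sub_ne_zero.2 (by exact_mod_cast i.isLt.ne')
        rw [← mul_pow, div_mul_div_cancel₀ this]
    _ ≤ _ := by
        rw [mul_sum, rpow_sum_of_pos h2p]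
        exact prod_le_prod (fun i _ => by rw [pow_mul]; positivity)
          fun i _ => two_mul_sub_div_pow_le_rpow i.isLt (lam i)
end

section
/- Let (X, Σ) be a measurable space, let μ and ν be probability measures on X, and let f : X → ℂ be a measurable function that is square-integrable with respect to both μ and ν. Suppose ∫ |f|² dν ≤ 1, let m = ∫ f dμ with |m| > 0, and let K = ∫ |f − m|² dμ. Then the measurable set A = { x : |f(x)| ≥ |m|/2 } satisfies μ(A) − ν(A) ≥ 1 − 4(K+1)/|m|²; in particular the total variation distance satisfies d_TV(μ, ν) = sup_{B ∈ Σ} |μ(B) − ν(B)| ≥ 1 − 4(K+1)/|m|². -/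
/-!
With `A = {|f| ≥ |m|/2}`, Chebyshev's inequality for `ν` gives `ν(A) ≤ 4/|m|²`. Off `A` the
reverse triangle inequality gives `|f - m| ≥ |m|/2`, so Chebyshev's inequality for `μ` gives
`μ(Aᶜ) ≤ 4K/|m|²`; hence `μ(A) - ν(A) ≥ 1 - 4(K+1)/|m|²`.
-/

open MeasureTheory

/-- Total variation distance between two measures:
`d_TV(μ, ν) = sup { |μ(A) - ν(A)| : A measurable }`. -/
noncomputable def tvDist {X : Type*} [MeasurableSpace X] (μ ν : Measure X) : ℝ :=
  ⨆ A : { s : Set X // MeasurableSet s }, |(μ A.1).toReal - (ν A.1).toReal|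

section Chebyshev

variable {X E : Type*} [MeasurableSpace X] [NormedAddCommGroup E] {μ : Measure X}

theorem sq_mul_measureReal_le_integral_norm_sq {g : X → E} (hg : MemLp g 2 μ) {a : ℝ}
    (ha : 0 ≤ a) : a ^ 2 * μ.real {x | a ≤ ‖g x‖} ≤ ∫ x, ‖g x‖ ^ 2 ∂μ := by
  have hint : Integrable (fun x => ‖g x‖ ^ 2) μ := hg.integrable_norm_pow two_ne_zero
  have hset : {x | a ≤ ‖g x‖} = {x | a ^ 2 ≤ ‖g x‖ ^ 2} := by
    ext x
    exact (pow_le_pow_iff_left₀ ha (norm_nonneg _) two_ne_zero).symm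
  rw [hset]
  exact mul_meas_ge_le_integral_of_nonneg (ae_of_all _ fun x => by positivity) hint _

theorem measureReal_norm_ge_le_integral_norm_sq_div {g : X → E} (hg : MemLp g 2 μ) {a : ℝ}
    (ha : 0 < a) : μ.real {x | a ≤ ‖g x‖} ≤ (∫ x, ‖g x‖ ^ 2 ∂μ) / a ^ 2 := by
  rw [le_div_iff₀ (by positivity), mul_comm]
  exact sq_mul_measureReal_le_integral_norm_sq hg ha.le

end Chebyshev

theorem abs_measureReal_sub_le_tvDist {X : Type*} [MeasurableSpace X] {μ ν : Measure X}
    [IsFiniteMeasure μ] [IsFiniteMeasure ν] {A : Set X} (hA : MeasurableSet A) :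
    |μ.real A - ν.real A| ≤ tvDist μ ν := by
  refine le_ciSup (f := fun B : {s : Set X // MeasurableSet s} => |μ.real B.1 - ν.real B.1|)
    ⟨μ.real Set.univ + ν.real Set.univ, ?_⟩ ⟨A, hA⟩
  rintro _ ⟨B, rfl⟩
  have hμB : 0 ≤ μ.real B.1 := measureReal_nonneg
  have hνB : 0 ≤ ν.real B.1 := measureReal_nonneg
  calc |μ.real B.1 - ν.real B.1| ≤ μ.real B.1 + ν.real B.1 :=
        abs_sub_le_iff.2 ⟨by linarith, by linarith⟩
    _ ≤ μ.real Set.univ + ν.real Set.univ :=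
        add_le_add (measureReal_mono (Set.subset_univ _)) (measureReal_mono (Set.subset_univ _))

theorem half_norm_le_norm_sub_of_norm_lt {E : Type*} [SeminormedAddCommGroup E] {x m : E}
    (hx : ‖x‖ < ‖m‖ / 2) : ‖m‖ / 2 ≤ ‖x - m‖ := by
  have := norm_sub_norm_le m x
  rw [norm_sub_rev] at this
  linarith

theorem statement14_general {X : Type*} [MeasurableSpace X] (μ ν : Measure X)
    [IsProbabilityMeasure μ] [IsProbabilityMeasure ν] (f : X → ℂ) (hf : Measurable f)
    (hfμ : MemLp f 2 μ) (hfν : MemLp f 2 ν)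
    (hν1 : ∫ x, ‖f x‖ ^ 2 ∂ν ≤ 1) (m : ℂ) (hm0 : 0 < ‖m‖)
    (K : ℝ) (hK : K = ∫ x, ‖f x - m‖ ^ 2 ∂μ) :
    (1 - 4 * (K + 1) / ‖m‖ ^ 2 ≤
        (μ {x | ‖m‖ / 2 ≤ ‖f x‖}).toReal - (ν {x | ‖m‖ / 2 ≤ ‖f x‖}).toReal) ∧
      1 - 4 * (K + 1) / ‖m‖ ^ 2 ≤ tvDist μ ν := by
  set A := {x | ‖m‖ / 2 ≤ ‖f x‖}
  have hA : MeasurableSet A := measurableSet_le measurable_const hf.norm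
  have hr : 0 < ‖m‖ / 2 := half_pos hm0
  have hνA : ν.real A ≤ 1 / (‖m‖ / 2) ^ 2 :=
    (measureReal_norm_ge_le_integral_norm_sq_div hfν hr).trans (by gcongr)
  have hμAc : μ.real Aᶜ ≤ K / (‖m‖ / 2) ^ 2 := by
    refine (measureReal_mono fun x hx => ?_).trans
      (hK ▸ measureReal_norm_ge_le_integral_norm_sq_div (hfμ.sub (memLp_const m)) hr)
    exact half_norm_le_norm_sub_of_norm_lt (not_le.mp hx)
  have hbound : 1 - 4 * (K + 1) / ‖m‖ ^ 2 ≤ μ.real A - ν.real A := by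
    rw [probReal_compl_eq_one_sub hA] at hμAc
    have : 4 * (K + 1) / ‖m‖ ^ 2 = K / (‖m‖ / 2) ^ 2 + 1 / (‖m‖ / 2) ^ 2 := by ring
    linarith
  exact ⟨hbound, hbound.trans ((le_abs_self _).trans (abs_measureReal_sub_le_tvDist hA))⟩

/-- Let `μ, ν` be probability measures, `f` measurable and square-integrable for both, with
`∫|f|²dν ≤ 1`, `m = ∫ f dμ`, `|m| > 0` and `K = ∫|f - m|²dμ`. Then the set
`A = {|f| ≥ |m|/2}` satisfies `μ(A) - ν(A) ≥ 1 - 4(K+1)/|m|²`, and in particular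
`d_TV(μ, ν) ≥ 1 - 4(K+1)/|m|²`. -/
theorem statement14 {X : Type*} [MeasurableSpace X] (μ ν : Measure X)
    [IsProbabilityMeasure μ] [IsProbabilityMeasure ν] (f : X → ℂ) (hf : Measurable f)
    (hfμ : MemLp f 2 μ) (hfν : MemLp f 2 ν)
    (hν1 : ∫ x, ‖f x‖ ^ 2 ∂ν ≤ 1) (m : ℂ) (hm : m = ∫ x, f x ∂μ) (hm0 : 0 < ‖m‖)
    (K : ℝ) (hK : K = ∫ x, ‖f x - m‖ ^ 2 ∂μ) :
    (1 - 4 * (K + 1) / ‖m‖ ^ 2 ≤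
        (μ {x | ‖m‖ / 2 ≤ ‖f x‖}).toReal - (ν {x | ‖m‖ / 2 ≤ ‖f x‖}).toReal) ∧
      1 - 4 * (K + 1) / ‖m‖ ^ 2 ≤ tvDist μ ν :=
  statement14_general μ ν f hf hfμ hfν hν1 m hm0 K hK
end

section
/- For every integer n ≥ 1, the Weyl dimension of the irreducible representation of USp(n,ℍ) of highest weight (1,1,…,1) equals the Catalan number: ∏_{1≤i≤j≤n} (2n+4−i−j)/(2n+2−i−j) = Cat(n+1) = (1/(n+2))·C(2n+2, n+1). Moreover, for every n ≥ 3 one has Cat(n+1) ≤ n^{(n+2)/2}. -/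
/-!
Reflecting both indices, `(i, j) ↦ (n - 1 - i, n - 1 - j)`, turns the Weyl product into
`∏_{0 ≤ b ≤ a < n} (a + b + 4) / (a + b + 2)`. Row `a` telescopes to
`(2a + 4)(2a + 3) / ((a + 3)(a + 2)) = Cat(a + 2) / Cat(a + 1)`, so the whole product is
`Cat(n + 1)`. For the bound, `Cat(m + 1) ≤ 4 Cat(m)` and `16 n^(n+2) ≤ (n+1)^(n+3)` give
`Cat(n + 1)² ≤ n^(n+2)` by induction from `Cat 4 = 14`.
-/

open Finset

theorem succ_succ_mul_catalan_succ (n : ℕ) :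
    (n + 2) * catalan (n + 1) = 2 * (2 * n + 1) * catalan n := by
  have h := Nat.succ_mul_centralBinom_succ n
  rw [← succ_mul_catalan_eq_centralBinom, ← succ_mul_catalan_eq_centralBinom] at h
  apply Nat.eq_of_mul_eq_mul_left n.succ_pos
  linarith

theorem catalan_succ_le_four_mul (n : ℕ) : catalan (n + 1) ≤ 4 * catalan n := by
  refine Nat.le_of_mul_le_mul_left ?_ (by omega : 0 < n + 2)
  calc (n + 2) * catalan (n + 1) = 2 * (2 * n + 1) * catalan n := succ_succ_mul_catalan_succ n
    _ ≤ (n + 2) * (4 * catalan n) := by nlinarith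

theorem cast_catalan_eq_div {K : Type*} [Field K] [CharZero K] (n : ℕ) :
    (catalan n : K) = 1 / (n + 1) * Nat.choose (2 * n) n := by
  rw [← Nat.centralBinom_eq_two_mul_choose, ← succ_mul_catalan_eq_centralBinom]
  push_cast
  field_simp

theorem prod_range_add_two_div {K : Type*} [Field K] [LinearOrder K] [IsStrictOrderedRing K]
    {x : K} (hx : 0 < x) (k : ℕ) :
    ∏ b ∈ range k, (x + b + 2) / (x + b) = (x + k + 1) * (x + k) / ((x + 1) * x) := by
  induction k with
  | zero => simp [div_self (by positivity : (x + 1) * x ≠ 0)]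
  | succ k ih =>
    rw [prod_range_succ, ih]
    push_cast
    field_simp
    ring

theorem prod_range_prod_range_succ_div_eq_catalan (n : ℕ) :
    ∏ a ∈ range n, ∏ b ∈ range (a + 1), ((a + b + 4 : ℝ) / (a + b + 2)) = catalan (n + 1) := by
  induction n with
  | zero => simp
  | succ n ih =>
    have row : ∏ b ∈ range (n + 1), ((n + b + 4 : ℝ) / (n + b + 2))
        = (2 * n + 4) * (2 * n + 3) / ((n + 3) * (n + 2)) := by
      convert prod_range_add_two_div (x := (n + 2 : ℝ)) (by positivity) (n + 1) using 1
      · exact prod_congr rfl fun b _ => by ring_nf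
      · push_cast; ring_nf
    have step : ((n + 3 : ℕ) : ℝ) * catalan (n + 1 + 1) =
        ((2 * (2 * (n + 1) + 1) : ℕ) : ℝ) * catalan (n + 1) := by
      exact_mod_cast succ_succ_mul_catalan_succ (n + 1)
    push_cast at step
    rw [prod_range_succ, ih, row]
    field_simp
    linear_combination (-(n : ℝ) - 2) * step

theorem Fin.prod_Ici_eq_prod_Iic_rev {M : Type*} [CommMonoid M] {n : ℕ} (i : Fin n)
    (f : Fin n → M) : ∏ j ∈ Ici i, f j = ∏ b ∈ Iic i.rev, f b.rev := by
  rw [← Fin.finsetImage_rev_Ici, prod_image fun _ _ _ _ h => Fin.rev_injective h]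
  simp only [Fin.rev_rev]

theorem Fin.cast_val_rev_add_one {R : Type*} [Ring R] {n : ℕ} (i : Fin n) :
    ((i.rev : ℕ) : R) + 1 = n - i := by
  rw [Fin.val_rev, Nat.cast_sub i.isLt]
  push_cast
  abel

theorem Nat.pow_succ_add_mul_pow_le_add_one_pow (x m : ℕ) :
    x ^ (m + 1) + (m + 1) * x ^ m ≤ (x + 1) ^ (m + 1) := by
  induction m with
  | zero => simp
  | succ m ih =>
    calc x ^ (m + 2) + (m + 2) * x ^ (m + 1) ≤ (x ^ (m + 1) + (m + 1) * x ^ m) * (x + 1) := by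
          nlinarith [pow_succ x m, pow_succ x (m + 1), Nat.zero_le (x ^ m)]
      _ ≤ (x + 1) ^ (m + 1) * (x + 1) := Nat.mul_le_mul_right _ ih
      _ = (x + 1) ^ (m + 2) := by rw [← pow_succ]

theorem Nat.sixteen_mul_pow_le_add_one_pow {n : ℕ} (hn : 3 ≤ n) :
    16 * n ^ (n + 2) ≤ (n + 1) ^ (n + 3) := by
  rcases le_or_gt 7 n with h | h
  · calc 16 * n ^ (n + 2) ≤ n ^ (n + 3) + (n + 3) * n ^ (n + 2) := by
          rw [pow_succ n (n + 2)]; nlinarith [Nat.zero_le (n ^ (n + 2))]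
      _ ≤ (n + 1) ^ (n + 3) := Nat.pow_succ_add_mul_pow_le_add_one_pow n (n + 2)
  · interval_cases n <;> norm_num

theorem catalan_succ_sq_le_pow {n : ℕ} (hn : 3 ≤ n) : catalan (n + 1) ^ 2 ≤ n ^ (n + 2) := by
  induction n, hn using Nat.le_induction with
  | base => norm_num [catalan_eq_centralBinom_div, Nat.centralBinom, Nat.choose]
  | succ n hn ih =>
    calc catalan (n + 2) ^ 2 ≤ (4 * catalan (n + 1)) ^ 2 := by
          gcongr; exact catalan_succ_le_four_mul _
      _ = 16 * catalan (n + 1) ^ 2 := by ring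
      _ ≤ 16 * n ^ (n + 2) := by gcongr
      _ ≤ (n + 1) ^ (n + 1 + 2) := Nat.sixteen_mul_pow_le_add_one_pow hn

theorem Real.le_rpow_div_two_of_sq_le_pow {c x : ℝ} (hx : 0 ≤ x) {k : ℕ} (h : c ^ 2 ≤ x ^ k) :
    c ≤ x ^ ((k : ℝ) / 2) := by
  rw [div_eq_mul_one_div, Real.rpow_mul hx, Real.rpow_natCast, ← Real.sqrt_eq_rpow]
  exact Real.le_sqrt_of_sq_le h

theorem symplectic_weyl_product_ones_eq_catalan (n : ℕ) :
    ∏ i : Fin n, ∏ j ∈ Ici i,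
        ((2 * (n : ℝ) + 4 - (((i : ℕ) : ℝ) + 1) - (((j : ℕ) : ℝ) + 1)) /
          (2 * (n : ℝ) + 2 - (((i : ℕ) : ℝ) + 1) - (((j : ℕ) : ℝ) + 1))) =
      catalan (n + 1) := by
  rw [← Fintype.prod_equiv Fin.revPerm (fun a => _) _ fun a => rfl,
    ← prod_range_prod_range_succ_div_eq_catalan, ← Fin.prod_univ_eq_prod_range]
  refine Fintype.prod_congr _ _ fun a => ?_
  rw [Fin.prod_Ici_eq_prod_Iic_rev, Fin.revPerm_apply, Fin.rev_rev, ← Nat.Iio_eq_range,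
    Finset.Iio_add_one_eq_Iic, ← Fin.map_valEmbedding_Iic, prod_map]
  refine prod_congr rfl fun b _ => ?_
  simp only [Fin.cast_val_rev_add_one, Fin.valEmbedding_apply]
  ring_nf

theorem statement19_general (n : ℕ) :
    (∏ i : Fin n, ∏ j ∈ Finset.Ici i,
        ((2 * (n : ℝ) + 4 - (((i : ℕ) : ℝ) + 1) - (((j : ℕ) : ℝ) + 1)) /
          (2 * (n : ℝ) + 2 - (((i : ℕ) : ℝ) + 1) - (((j : ℕ) : ℝ) + 1))) =
        (catalan (n + 1) : ℝ)) ∧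
      ((catalan (n + 1) : ℝ) = 1 / ((n : ℝ) + 2) * (Nat.choose (2 * n + 2) (n + 1) : ℝ)) ∧
      (3 ≤ n → (catalan (n + 1) : ℝ) ≤ (n : ℝ) ^ (((n : ℝ) + 2) / 2)) := by
  refine ⟨symplectic_weyl_product_ones_eq_catalan n, ?_, fun hn => ?_⟩
  · rw [cast_catalan_eq_div, mul_add_one 2 n]
    push_cast
    ring
  · have hsq : ((catalan (n + 1) : ℕ) : ℝ) ^ 2 ≤ (n : ℝ) ^ (n + 2) := by
      exact_mod_cast catalan_succ_sq_le_pow hn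
    simpa using Real.le_rpow_div_two_of_sq_le_pow n.cast_nonneg hsq

/-- For every `n ≥ 1`, the Weyl dimension of the irreducible representation of `USp(n,ℍ)` of
highest weight `(1,1,…,1)` equals the Catalan number:
`∏_{1≤i≤j≤n} (2n+4-i-j)/(2n+2-i-j) = Cat(n+1) = (1/(n+2))·C(2n+2, n+1)`.
Moreover, for every `n ≥ 3` one has `Cat(n+1) ≤ n^{(n+2)/2}`. -/
theorem statement19 (n : ℕ) (hn : 1 ≤ n) :
    (∏ i : Fin n, ∏ j ∈ Finset.Ici i,
        ((2 * (n : ℝ) + 4 - (((i : ℕ) : ℝ) + 1) - (((j : ℕ) : ℝ) + 1)) /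
          (2 * (n : ℝ) + 2 - (((i : ℕ) : ℝ) + 1) - (((j : ℕ) : ℝ) + 1))) =
        (catalan (n + 1) : ℝ)) ∧
      ((catalan (n + 1) : ℝ) = 1 / ((n : ℝ) + 2) * (Nat.choose (2 * n + 2) (n + 1) : ℝ)) ∧
      (3 ≤ n → (catalan (n + 1) : ℝ) ≤ (n : ℝ) ^ (((n : ℝ) + 2) / 2)) :=
  statement19_general n
end
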